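/- arXiv:1512.00116 — 4 statements merged into one kernel-verified Lean document; each statement's English description precedes it below -/
import Mathlib

section
/- For strictly decreasing λ ∈ (1/2+ℤ)^n, the character of the Euler characteristic module E(λ) of q(n) satisfies ch E(λ) = 2^{⌈n/2⌉} s_{ρ_n}(x_1,…,x_n) s_{λ-ρ_n}(x_1,…,x_n); that is, 2^{⌈n/2⌉} Σ_{w ∈ S_n} w( x^λ ∏_{i<j} (x_i+x_j)/(x_i-x_j) ) = 2^{⌈n/2⌉} s_{ρ_n}(x) s_{λ-ρ_n}(x). -/
open Finset

noncomputable section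

/-- Field of rational functions in variables `y_1,…,y_n` over `ℚ`, where `x_i = y_i²`
(so that half-integer powers of the `x_i` make sense as integer powers of `y_i`). -/
abbrev RF (n : ℕ) := FractionRing (MvPolynomial (Fin n) ℚ)

def yv (n : ℕ) (i : Fin n) : RF n :=
  algebraMap (MvPolynomial (Fin n) ℚ) (RF n) (MvPolynomial.X i)

/-- The signed symmetrization `Σ_{w∈S_n} (-1)^{ℓ(w)} w(x^e)` written in the `y`
variables: `Σ_w sign(w) ∏_i y_{w(i)}^{e_i}` (here `e_i = 2·(exponent of x_i)`). -/
def signedSum (n : ℕ) (e : Fin n → ℤ) : RF n :=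
  ∑ w : Equiv.Perm (Fin n), ((Equiv.Perm.sign w : ℤ) : RF n) * ∏ i, yv n (w i) ^ e i

section Aux

variable {R : Type*} [CommRing R] {n : ℕ}

lemma prod_pairs (f : Fin n → Fin n → R) :
    ∏ p ∈ Finset.univ.filter (fun p : Fin n × Fin n => p.1 < p.2), f p.1 p.2
      = ∏ i : Fin n, ∏ j ∈ Ioi i, f i j := by
  rw [← Finset.univ_product_univ, Finset.prod_filter, Finset.prod_product]
  refine Finset.prod_congr rfl fun i _ => ?_
  rw [← Finset.prod_filter]
  apply Finset.prod_congr _ (fun _ _ => rfl)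
  ext j; simp

lemma revPerm_mul_revPerm : (Fin.revPerm : Equiv.Perm (Fin n)) * Fin.revPerm = 1 := by
  ext i
  simp [Fin.rev_rev]

lemma conj_rev_involutive :
    Function.Involutive
      (fun w : Equiv.Perm (Fin n) => (Fin.revPerm * w * Fin.revPerm : Equiv.Perm (Fin n))) := by
  intro w
  simp only [← mul_assoc]
  rw [revPerm_mul_revPerm, one_mul, mul_assoc, revPerm_mul_revPerm, mul_one]

lemma sign_conj_rev (w : Equiv.Perm (Fin n)) :
    Equiv.Perm.sign ((Fin.revPerm * w * Fin.revPerm : Equiv.Perm (Fin n)))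
      = Equiv.Perm.sign w := by
  rw [map_mul, map_mul, mul_right_comm, Int.units_mul_self, one_mul]

/-- The key evaluation: the signed symmetrization of `∏ v i ^ (n-1-i)` is the
"Vandermonde product" `∏_{i<j} (v i - v j)`. -/
lemma signed_sum_eq_prod (v : Fin n → R) :
    ∑ w : Equiv.Perm (Fin n), ((Equiv.Perm.sign w : ℤ) : R) *
        ∏ i : Fin n, v (w i) ^ (n - 1 - (i : ℕ)) =
      ∏ p ∈ Finset.univ.filter (fun p : Fin n × Fin n => p.1 < p.2), (v p.1 - v p.2) := by
  have h2 : ∑ w : Equiv.Perm (Fin n), ((Equiv.Perm.sign w : ℤ) : R) *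
        ∏ i : Fin n, v (w i) ^ (n - 1 - (i : ℕ))
      = Matrix.det (Matrix.vandermonde (v ∘ Fin.rev)) := by
    rw [Matrix.det_apply]
    refine Fintype.sum_bijective
      (fun w => (Fin.revPerm * w * Fin.revPerm : Equiv.Perm (Fin n)))
      conj_rev_involutive.bijective _ _ fun w => ?_
    rw [sign_conj_rev, Units.smul_def, zsmul_eq_mul]
    congr 1
    refine Fintype.prod_equiv Fin.revPerm _ _ fun i => ?_
    simp only [Matrix.vandermonde_apply, Function.comp_apply, Equiv.Perm.mul_apply,
      Fin.revPerm_apply, Fin.rev_rev]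
    congr 1
    have hi := i.isLt
    rw [Fin.val_rev]
    omega
  rw [h2, Matrix.det_vandermonde,
    ← prod_pairs (fun i j => (v ∘ Fin.rev) j - (v ∘ Fin.rev) i)]
  refine Finset.prod_nbij' (fun p => (p.2.rev, p.1.rev)) (fun p => (p.2.rev, p.1.rev))
    ?_ ?_ ?_ ?_ ?_
  · intro p hp
    simp only [Finset.mem_filter, Finset.mem_univ, true_and] at hp ⊢
    exact Fin.rev_lt_rev.mpr hp
  · intro p hp
    simp only [Finset.mem_filter, Finset.mem_univ, true_and] at hp ⊢
    exact Fin.rev_lt_rev.mpr hp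
  · intro p _; simp [Fin.rev_rev]
  · intro p _; simp [Fin.rev_rev]
  · intro p _; simp

/-- Antisymmetrization of the Vandermonde product under a permutation. -/
lemma prod_sub_perm (u : Fin n → R) (w : Equiv.Perm (Fin n)) :
    ∏ p ∈ Finset.univ.filter (fun p : Fin n × Fin n => p.1 < p.2), (u (w p.1) - u (w p.2))
      = ((Equiv.Perm.sign w : ℤ) : R) *
        ∏ p ∈ Finset.univ.filter (fun p : Fin n × Fin n => p.1 < p.2), (u p.1 - u p.2) := by
  have h1 := signed_sum_eq_prod (R := R) (n := n) (fun j => u (w j))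
  have hmul : ∀ τ : Equiv.Perm (Fin n),
      ((Equiv.Perm.sign (w⁻¹ * τ) : ℤ) : R) =
        ((Equiv.Perm.sign w : ℤ) : R) * ((Equiv.Perm.sign τ : ℤ) : R) := by
    intro τ
    rw [map_mul, Equiv.Perm.sign_inv, Units.val_mul, Int.cast_mul]
  have h2 : ∑ w' : Equiv.Perm (Fin n), ((Equiv.Perm.sign w' : ℤ) : R) *
        ∏ i : Fin n, u (w (w' i)) ^ (n - 1 - (i : ℕ))
      = ((Equiv.Perm.sign w : ℤ) : R) *
        ∑ τ : Equiv.Perm (Fin n), ((Equiv.Perm.sign τ : ℤ) : R) *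
          ∏ i : Fin n, u (τ i) ^ (n - 1 - (i : ℕ)) := by
    rw [Finset.mul_sum]
    refine Fintype.sum_bijective (fun w' => w * w')
      (Group.mulLeft_bijective w) _ _ fun w' => ?_
    have : w⁻¹ * (w * w') = w' := by group
    rw [← this, hmul]
    simp only [this, Equiv.Perm.mul_apply]
    ring
  rw [← signed_sum_eq_prod (R := R) (n := n) u, ← h2, ← h1]

/-- Symmetrization of a symmetric pair-product under a permutation. -/
lemma prod_symm_perm (g : Fin n → Fin n → R) (hg : ∀ i j, g i j = g j i)
    (w : Equiv.Perm (Fin n)) :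
    ∏ p ∈ Finset.univ.filter (fun p : Fin n × Fin n => p.1 < p.2), g (w p.1) (w p.2)
      = ∏ p ∈ Finset.univ.filter (fun p : Fin n × Fin n => p.1 < p.2), g p.1 p.2 := by
  refine Finset.prod_nbij'
    (fun p => if w p.1 < w p.2 then (w p.1, w p.2) else (w p.2, w p.1))
    (fun q => if w⁻¹ q.1 < w⁻¹ q.2 then (w⁻¹ q.1, w⁻¹ q.2) else (w⁻¹ q.2, w⁻¹ q.1))
    ?_ ?_ ?_ ?_ ?_
  · intro p hp
    simp only [Finset.mem_filter, Finset.mem_univ, true_and] at hp ⊢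
    split_ifs with h
    · exact h
    · rcases lt_or_gt_of_ne (fun he : w p.1 = w p.2 => hp.ne (w.injective he)) with h' | h'
      · exact absurd h' h
      · exact h'
  · intro q hq
    simp only [Finset.mem_filter, Finset.mem_univ, true_and] at hq ⊢
    split_ifs with h
    · exact h
    · rcases lt_or_gt_of_ne
        (fun he : w⁻¹ q.1 = w⁻¹ q.2 => hq.ne (w⁻¹.injective he)) with h' | h'
      · exact absurd h' h
      · exact h'
  · intro p hp
    simp only [Finset.mem_filter, Finset.mem_univ, true_and] at hp
    split_ifs with h <;> simp_all [hp.le.not_gt, hp]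
  · intro q hq
    simp only [Finset.mem_filter, Finset.mem_univ, true_and] at hq
    split_ifs with h <;> simp_all [hq.le.not_gt, hq]
  · intro p _
    split_ifs with h
    · rfl
    · exact hg _ _

end Aux

lemma yv_sq_sub_ne_zero {n : ℕ} {i j : Fin n} (hij : i ≠ j) (c : ℕ) (hc : c ≠ 0) :
    yv n i ^ c - yv n j ^ c ≠ 0 := by
  have h1 : yv n i ^ c - yv n j ^ c
      = algebraMap (MvPolynomial (Fin n) ℚ) (RF n)
          (MvPolynomial.X i ^ c - MvPolynomial.X j ^ c) := by
    simp [yv, map_sub, map_pow]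
  rw [h1]
  intro h0
  have hp : (MvPolynomial.X i ^ c - MvPolynomial.X j ^ c : MvPolynomial (Fin n) ℚ) = 0 :=
    IsFractionRing.injective (MvPolynomial (Fin n) ℚ) (RF n) (by rw [map_zero]; exact h0)
  have h : MvPolynomial.X i ^ c = (MvPolynomial.X j ^ c : MvPolynomial (Fin n) ℚ) :=
    sub_eq_zero.mp hp
  have h2 := congrArg (MvPolynomial.eval (fun k => if k = i then (1 : ℚ) else 0)) h
  rw [map_pow, map_pow, MvPolynomial.eval_X, MvPolynomial.eval_X, if_pos rfl,
    if_neg (Ne.symm hij), one_pow, zero_pow hc] at h2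
  exact one_ne_zero h2

lemma signedSum_mul (n c : ℕ) :
    signedSum n (fun i => (c : ℤ) * ((n : ℤ) - 1 - (i : ℕ)))
      = ∏ p ∈ Finset.univ.filter (fun p : Fin n × Fin n => p.1 < p.2),
          (yv n p.1 ^ c - yv n p.2 ^ c) := by
  rw [← signed_sum_eq_prod (fun j => yv n j ^ c)]
  unfold signedSum
  refine Finset.sum_congr rfl fun w _ => ?_
  congr 1
  refine Finset.prod_congr rfl fun i _ => ?_
  dsimp only
  have hi := i.isLt
  have he : (c : ℤ) * ((n : ℤ) - 1 - (i : ℕ)) = ((c * (n - 1 - (i : ℕ)) : ℕ) : ℤ) := by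
    push_cast [Nat.sub_sub]
    rw [Nat.cast_sub (by omega)]
    push_cast
    ring
  rw [he, zpow_natCast, pow_mul]

/-- Character formula for the Euler characteristic module `E(λ)` of `q(n)`, for
strictly decreasing half-odd-integer `λ` with `λ_i = a_i + 1/2`:
`Σ_{w∈S_n} w( x^λ ∏_{i<j} (x_i+x_j)/(x_i-x_j) ) = s_{ρ_n}(x) · s_{λ-ρ_n}(x)`,
where `s_μ(x) = Σ_w (-1)^{ℓ(w)} w(x^{μ+ρ_n}) / Σ_w (-1)^{ℓ(w)} w(x^{ρ_n})`
(equivalently `ch E(λ) = 2^{⌈n/2⌉} s_{ρ_n} s_{λ-ρ_n}`). -/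
theorem euler_character_formula (n : ℕ) (hn : 1 ≤ n) (a : Fin n → ℤ)
    (hdec : ∀ i j : Fin n, i < j → ((a j : ℚ) + 1/2) < ((a i : ℚ) + 1/2)) :
    ∑ w : Equiv.Perm (Fin n),
        (∏ i, yv n (w i) ^ (2 * a i + 1 : ℤ)) *
          ∏ p ∈ Finset.univ.filter (fun p : Fin n × Fin n => p.1 < p.2),
            ((yv n (w p.1) ^ 2 + yv n (w p.2) ^ 2) /
              (yv n (w p.1) ^ 2 - yv n (w p.2) ^ 2))
      = (signedSum n (fun i => 4 * ((n : ℤ) - 1 - (i : ℕ)))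
            / signedSum n (fun i => 2 * ((n : ℤ) - 1 - (i : ℕ))))
        * (signedSum n (fun i => 2 * a i + 1)
            / signedSum n (fun i => 2 * ((n : ℤ) - 1 - (i : ℕ)))) := by
  classical
  set D : RF n := ∏ p ∈ Finset.univ.filter (fun p : Fin n × Fin n => p.1 < p.2),
      (yv n p.1 ^ 2 - yv n p.2 ^ 2) with hD
  set S : RF n := ∏ p ∈ Finset.univ.filter (fun p : Fin n × Fin n => p.1 < p.2),
      (yv n p.1 ^ 2 + yv n p.2 ^ 2) with hS
  have hDne : D ≠ 0 := by
    rw [hD]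
    refine Finset.prod_ne_zero_iff.mpr fun p hp => ?_
    simp only [Finset.mem_filter, Finset.mem_univ, true_and] at hp
    exact yv_sq_sub_ne_zero hp.ne 2 two_ne_zero
  have hA2 : signedSum n (fun i => 2 * ((n : ℤ) - 1 - (i : ℕ))) = D := by
    have h2' : (fun i : Fin n => 2 * ((n : ℤ) - 1 - (i : ℕ)))
        = (fun i : Fin n => ((2 : ℕ) : ℤ) * ((n : ℤ) - 1 - (i : ℕ))) := by norm_num
    rw [h2', signedSum_mul n 2, hD]
  have hA4 : signedSum n (fun i => 4 * ((n : ℤ) - 1 - (i : ℕ))) = S * D := by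
    have h4' : (fun i : Fin n => 4 * ((n : ℤ) - 1 - (i : ℕ)))
        = (fun i : Fin n => ((4 : ℕ) : ℤ) * ((n : ℤ) - 1 - (i : ℕ))) := by norm_num
    rw [h4', signedSum_mul n 4, hS, hD, ← Finset.prod_mul_distrib]
    refine Finset.prod_congr rfl fun p _ => ?_
    ring
  -- rewrite each summand
  have hterm : ∀ w : Equiv.Perm (Fin n),
      (∏ i, yv n (w i) ^ (2 * a i + 1 : ℤ)) *
          ∏ p ∈ Finset.univ.filter (fun p : Fin n × Fin n => p.1 < p.2),
            ((yv n (w p.1) ^ 2 + yv n (w p.2) ^ 2) /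
              (yv n (w p.1) ^ 2 - yv n (w p.2) ^ 2))
        = (S / D) * (((Equiv.Perm.sign w : ℤ) : RF n) *
            ∏ i, yv n (w i) ^ (2 * a i + 1 : ℤ)) := by
    intro w
    have hnum : ∏ p ∈ Finset.univ.filter (fun p : Fin n × Fin n => p.1 < p.2),
        (yv n (w p.1) ^ 2 + yv n (w p.2) ^ 2) = S := by
      rw [hS]
      exact prod_symm_perm (fun i j => yv n i ^ 2 + yv n j ^ 2) (fun i j => add_comm _ _) w
    have hden : ∏ p ∈ Finset.univ.filter (fun p : Fin n × Fin n => p.1 < p.2),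
        (yv n (w p.1) ^ 2 - yv n (w p.2) ^ 2)
          = ((Equiv.Perm.sign w : ℤ) : RF n) * D := by
      rw [hD]
      exact prod_sub_perm (fun j => yv n j ^ 2) w
    have hs2 : ((Equiv.Perm.sign w : ℤ) : RF n) * ((Equiv.Perm.sign w : ℤ) : RF n) = 1 := by
      rw [← Int.cast_mul, ← Units.val_mul, Int.units_mul_self, Units.val_one, Int.cast_one]
    have hsne : ((Equiv.Perm.sign w : ℤ) : RF n) ≠ 0 := by
      intro h
      rw [h, mul_zero] at hs2
      exact one_ne_zero hs2.symm
    rw [Finset.prod_div_distrib, hnum, hden]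
    have key : S / (((Equiv.Perm.sign w : ℤ) : RF n) * D)
        = ((Equiv.Perm.sign w : ℤ) : RF n) * S / D := by
      rw [div_eq_div_iff (mul_ne_zero hsne hDne) hDne]
      linear_combination (-(S * D)) * hs2
    rw [key]
    ring
  rw [Finset.sum_congr rfl (fun w _ => hterm w), ← Finset.mul_sum]
  have hB : ∑ w : Equiv.Perm (Fin n), ((Equiv.Perm.sign w : ℤ) : RF n) *
      ∏ i, yv n (w i) ^ (2 * a i + 1 : ℤ) = signedSum n (fun i => 2 * a i + 1) := rfl
  rw [hB, hA2, hA4]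
  field_simp

end
end

section
/- In the free ℚ(q)-module on basis v_r (r ∈ 1/2+ℤ), consider the n=2 tensor square modulo the relations: v_r⊗v_r, v_r⊗v_s + q v_s⊗v_r for r > s with r+s ≠ 0, v_r⊗v_{-r} + q(v_{r-1}⊗v_{1-r} + v_{1-r}⊗v_{r-1}) + q² v_{-r}⊗v_r for r > 1/2, and v_{1/2}⊗v_{-1/2} + q² v_{-1/2}⊗v_{1/2}. Then in the quotient, the images of v_r⊗v_s for r < s form a spanning set, and more precisely the image of v_r⊗v_s for r > s is (up to the stated signs and powers of q) a q·ℤ[q]-linear combination of images of v_{r'}⊗v_{s'} with r' < s'. -/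
noncomputable section
open Finset

/-- Half-odd-integers. -/
abbrev HO : Type := {x : ℚ // ∃ k : ℤ, x = k + 1/2}

def HO.neg (r : HO) : HO :=
  ⟨-r.val, by obtain ⟨k, hk⟩ := r.2; exact ⟨-k - 1, by rw [hk]; push_cast; ring⟩⟩

def HO.sub1 (r : HO) : HO :=
  ⟨r.val - 1, by obtain ⟨k, hk⟩ := r.2; exact ⟨k - 1, by rw [hk]; push_cast; ring⟩⟩

def HO.half : HO := ⟨1/2, 0, by norm_num⟩

/-- The base field `ℚ(q)`. -/
abbrev Kq : Type := RatFunc ℚ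

def qq : Kq := RatFunc.X

/-- The `n = 2` tensor space `𝕋² = 𝕍 ⊗ 𝕍`, as the free `ℚ(q)`-module on pairs. -/
abbrev T2 : Type := (HO × HO) →₀ Kq

/-- The monomial `v_r ⊗ v_s`. -/
def Mv (p : HO × HO) : T2 := Finsupp.single p 1

/-- The generators of `𝕂²`. -/
def Kgen : Set T2 :=
  {x | ∃ r : HO, x = Mv (r, r)} ∪
  {x | ∃ r s : HO, s < r ∧ r.val + s.val ≠ 0 ∧ x = Mv (r, s) + qq • Mv (s, r)} ∪
  {x | ∃ r : HO, (1 : ℚ)/2 < r.val ∧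
      x = Mv (r, HO.neg r)
        + qq • (Mv (HO.sub1 r, HO.neg (HO.sub1 r)) + Mv (HO.neg (HO.sub1 r), HO.sub1 r))
        + qq ^ 2 • Mv (HO.neg r, r)} ∪
  {x | x = Mv (HO.half, HO.neg HO.half) + qq ^ 2 • Mv (HO.neg HO.half, HO.half)}

/-- The submodule `𝕂² ⊆ 𝕋²`. -/
def Ksub : Submodule Kq T2 := Submodule.span Kq Kgen

/-- The quotient `𝕋²/𝕂²`. -/
abbrev Quot2 : Type := T2 ⧸ Ksub

/-- The canonical projection `π`. -/
def piq (x : T2) : Quot2 := Submodule.Quotient.mk x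

/-- The map `ℤ[q] → ℚ(q)`. -/
def phi (c : Polynomial ℤ) : Kq := algebraMap (Polynomial ℚ) Kq (c.map (Int.castRingHom ℚ))

lemma phi_zero : phi 0 = 0 := by simp [phi]

lemma phi_add (a b : Polynomial ℤ) : phi (a + b) = phi a + phi b := by
  simp [phi, Polynomial.map_add]

lemma phi_mul (a b : Polynomial ℤ) : phi (a * b) = phi a * phi b := by
  simp [phi, Polynomial.map_mul]

lemma phi_X : phi Polynomial.X = qq := by
  simp [phi, qq, RatFunc.algebraMap_X]

lemma phi_neg (a : Polynomial ℤ) : phi (-a) = - phi a := by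
  simp [phi, Polynomial.map_neg]

lemma phi_X2 : phi (Polynomial.X ^ 2) = qq ^ 2 := by
  rw [pow_two, pow_two, phi_mul, phi_X]

/-- The key predicate: a `q·ℤ[q]`-linear combination of increasing monomials. -/
def Good (x : Quot2) : Prop :=
  ∃ (S : Finset (HO × HO)) (c : HO × HO → Polynomial ℤ),
    (∀ p ∈ S, p.1 < p.2) ∧ (∀ p, (c p).coeff 0 = 0) ∧
    x = ∑ p ∈ S, phi (c p) • piq (Mv p)

lemma good_zero : Good 0 :=
  ⟨∅, fun _ => 0, by simp, by simp, by simp⟩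

lemma good_single (r s : HO) (h : r < s) (d : Polynomial ℤ) (hd : d.coeff 0 = 0) :
    Good (phi d • piq (Mv (r, s))) :=
  ⟨{(r, s)}, fun _ => d, by simpa using h, fun _ => hd, by rw [Finset.sum_singleton]⟩

lemma sum_union_ite (S T : Finset (HO × HO)) (f : HO × HO → Polynomial ℤ) :
    ∑ p ∈ S ∪ T, phi (if p ∈ S then f p else 0) • piq (Mv p)
      = ∑ p ∈ S, phi (f p) • piq (Mv p) := by
  rw [← Finset.sum_subset Finset.subset_union_left
      (fun p _ hp => by rw [if_neg hp, phi_zero, zero_smul])]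
  exact Finset.sum_congr rfl fun p hp => by rw [if_pos hp]

lemma good_add {x y : Quot2} (hx : Good x) (hy : Good y) : Good (x + y) := by
  obtain ⟨S1, c1, h11, h12, h13⟩ := hx
  obtain ⟨S2, c2, h21, h22, h23⟩ := hy
  refine ⟨S1 ∪ S2, fun p => (if p ∈ S1 then c1 p else 0) + (if p ∈ S2 then c2 p else 0),
    ?_, ?_, ?_⟩
  · intro p hp
    rcases Finset.mem_union.1 hp with h | h
    · exact h11 p h
    · exact h21 p h
  · intro p
    rw [Polynomial.coeff_add]
    split_ifs <;> simp [h12, h22]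
  · have : ∑ p ∈ S1 ∪ S2,
        phi ((if p ∈ S1 then c1 p else 0) + (if p ∈ S2 then c2 p else 0)) • piq (Mv p)
        = ∑ p ∈ S1 ∪ S2, phi (if p ∈ S1 then c1 p else 0) • piq (Mv p)
          + ∑ p ∈ S1 ∪ S2, phi (if p ∈ S2 then c2 p else 0) • piq (Mv p) := by
      rw [← Finset.sum_add_distrib]
      exact Finset.sum_congr rfl fun p _ => by rw [phi_add, add_smul]
    rw [this, sum_union_ite, Finset.union_comm, sum_union_ite, h13, h23]

lemma good_phismul {x : Quot2} (d : Polynomial ℤ) (hx : Good x) : Good (phi d • x) := by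
  obtain ⟨S, c, h1, h2, h3⟩ := hx
  refine ⟨S, fun p => d * c p, h1,
    fun p => by rw [Polynomial.mul_coeff_zero, h2, mul_zero], ?_⟩
  rw [h3, Finset.smul_sum]
  exact Finset.sum_congr rfl fun p hp => by rw [phi_mul, mul_smul]

lemma mem_Ksub_piq {x : T2} (h : x ∈ Kgen) : piq x = 0 :=
  (Submodule.Quotient.mk_eq_zero _).2 (Submodule.subset_span h)

lemma piq_add (x y : T2) : piq (x + y) = piq x + piq y := rfl

lemma piq_smul (a : Kq) (x : T2) : piq (a • x) = a • piq x := rfl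

lemma rel_diag (r : HO) : piq (Mv (r, r)) = 0 :=
  mem_Ksub_piq (Or.inl (Or.inl (Or.inl ⟨r, rfl⟩)))

lemma rel2 (r s : HO) (h : s < r) (h2 : r.val + s.val ≠ 0) :
    piq (Mv (r, s)) = -(qq • piq (Mv (s, r))) := by
  have h0 := mem_Ksub_piq (Or.inl (Or.inl (Or.inr ⟨r, s, h, h2, rfl⟩)))
  rw [piq_add, piq_smul] at h0
  exact eq_neg_of_add_eq_zero_left h0

lemma rel3 (r : HO) (h : (1 : ℚ)/2 < r.val) :
    piq (Mv (r, HO.neg r))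
      = -(qq • piq (Mv (HO.sub1 r, HO.neg (HO.sub1 r))))
        - qq • piq (Mv (HO.neg (HO.sub1 r), HO.sub1 r))
        - qq ^ 2 • piq (Mv (HO.neg r, r)) := by
  have h0 := mem_Ksub_piq (Or.inl (Or.inr ⟨r, h, rfl⟩))
  rw [piq_add, piq_add, piq_smul, piq_smul, piq_add, smul_add] at h0
  rw [eq_sub_iff_add_eq, eq_sub_iff_add_eq, eq_neg_iff_add_eq_zero, ← h0]
  abel

lemma rel4 : piq (Mv (HO.half, HO.neg HO.half))
    = -(qq ^ 2 • piq (Mv (HO.neg HO.half, HO.half))) := by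
  have h0 := mem_Ksub_piq (Or.inr rfl)
  rw [piq_add, piq_smul] at h0
  exact eq_neg_of_add_eq_zero_left h0

lemma good_neg : ∀ k : ℕ, ∀ r : HO, r.val = k + 1/2 → Good (piq (Mv (r, HO.neg r))) := by
  intro k
  induction k with
  | zero =>
    intro r hr
    have hh : r = HO.half := Subtype.ext (by rw [hr]; norm_num [HO.half])
    subst hh
    rw [rel4]
    have := good_single (HO.neg HO.half) HO.half
      (by rw [← Subtype.coe_lt_coe]; show -(1/2 : ℚ) < 1/2; norm_num)
      (-(Polynomial.X ^ 2)) (by simp)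
    rwa [phi_neg, phi_X2, neg_smul] at this
  | succ k ih =>
    intro r hr
    have hk0 : (0 : ℚ) ≤ (k : ℚ) := Nat.cast_nonneg k
    have hval : r.val = (k : ℚ) + 1 + 1/2 := by rw [hr]; push_cast; ring
    have hr2 : (1 : ℚ)/2 < r.val := by rw [hval]; linarith
    rw [rel3 r hr2]
    have hA : Good (phi (-Polynomial.X) • piq (Mv (HO.sub1 r, HO.neg (HO.sub1 r)))) :=
      good_phismul _ (ih (HO.sub1 r) (by show r.val - 1 = (k : ℚ) + 1/2; rw [hval]; ring))
    have hB : Good (phi (-Polynomial.X) • piq (Mv (HO.neg (HO.sub1 r), HO.sub1 r))) := by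
      refine good_single _ _ ?_ _ (by simp)
      rw [← Subtype.coe_lt_coe]
      show -(r.val - 1) < r.val - 1
      rw [hval]; linarith
    have hC : Good (phi (-(Polynomial.X ^ 2)) • piq (Mv (HO.neg r, r))) := by
      refine good_single _ _ ?_ _ (by simp)
      rw [← Subtype.coe_lt_coe]
      show -r.val < r.val
      rw [hval]; linarith
    have hG := good_add (good_add hA hB) hC
    rw [phi_neg, phi_neg, phi_X, phi_X2] at hG
    have e : -(qq • piq (Mv (HO.sub1 r, HO.neg (HO.sub1 r))))
        - qq • piq (Mv (HO.neg (HO.sub1 r), HO.sub1 r))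
        - qq ^ 2 • piq (Mv (HO.neg r, r))
        = -qq • piq (Mv (HO.sub1 r, HO.neg (HO.sub1 r)))
          + -qq • piq (Mv (HO.neg (HO.sub1 r), HO.sub1 r))
          + -(qq ^ 2) • piq (Mv (HO.neg r, r)) := by
      rw [neg_smul, neg_smul, neg_smul]; abel
    rw [e]
    exact hG

lemma good_pair (l1 l2 : HO) (h : l2 ≤ l1) : Good (piq (Mv (l1, l2))) := by
  rcases eq_or_lt_of_le h with heq | hlt
  · rw [heq, rel_diag]; exact good_zero
  · by_cases h0 : l1.val + l2.val = 0
    · have hl2 : l2 = HO.neg l1 := Subtype.ext (by show l2.val = -l1.val; linarith)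
      subst hl2
      obtain ⟨k, hk⟩ := l1.2
      have hlt' : -l1.val < l1.val := Subtype.coe_lt_coe.2 hlt
      have hpos : (0 : ℚ) < l1.val := by linarith
      have hk0 : 0 ≤ k := by
        by_contra hneg
        push_neg at hneg
        have h1 : k ≤ -1 := by omega
        have h2 : (k : ℚ) ≤ -1 := by exact_mod_cast h1
        rw [hk] at hpos; linarith
      lift k to ℕ using hk0 with n
      exact good_neg n l1 (by rw [hk]; push_cast; ring)
    · rw [rel2 l1 l2 hlt h0]
      have := good_single l2 l1 hlt (-Polynomial.X) (by simp)
      rwa [phi_neg, phi_X, neg_smul] at this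

lemma mem_span_inc (p : HO × HO) :
    piq (Mv p) ∈ Submodule.span Kq ((fun p : HO × HO => piq (Mv p)) '' {p | p.1 < p.2}) := by
  by_cases h : p.1 < p.2
  · exact Submodule.subset_span ⟨p, h, rfl⟩
  · obtain ⟨S, c, h1, h2, h3⟩ := good_pair p.1 p.2 (not_lt.1 h)
    rw [show (p.1, p.2) = p from rfl] at h3
    rw [h3]
    exact Submodule.sum_mem _ fun q hq =>
      Submodule.smul_mem _ _ (Submodule.subset_span ⟨q, h1 q hq, rfl⟩)

/-- In `𝕋²/𝕂²`, the images of `v_r ⊗ v_s` for `r < s` span, and more precisely the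
image of `v_{λ_1} ⊗ v_{λ_2}` for `λ_1 ≥ λ_2` is a `q·ℤ[q]`-linear combination of
images of `v_{μ_1} ⊗ v_{μ_2}` with `μ_1 < μ_2`. -/
theorem quotient_spanned_by_increasing :
    (Submodule.span Kq ((fun p : HO × HO => piq (Mv p)) '' {p | p.1 < p.2}) = ⊤) ∧
    ∀ l1 l2 : HO, l2 ≤ l1 →
      ∃ (S : Finset (HO × HO)) (c : HO × HO → Polynomial ℤ),
        (∀ p ∈ S, p.1 < p.2) ∧ (∀ p, (c p).coeff 0 = 0) ∧
        piq (Mv (l1, l2))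
          = ∑ p ∈ S,
              (algebraMap (Polynomial ℚ) Kq ((c p).map (Int.castRingHom ℚ))) • piq (Mv p) := by
  constructor
  · rw [eq_top_iff]
    rintro x -
    obtain ⟨y, rfl⟩ := Submodule.Quotient.mk_surjective _ x
    induction y using Finsupp.induction with
    | zero => exact Submodule.zero_mem _
    | single_add a b f _ _ ih =>
      rw [show (Submodule.Quotient.mk (Finsupp.single a b + f) : Quot2)
          = b • piq (Mv a) + Submodule.Quotient.mk f by
        rw [← piq_smul]
        show Submodule.Quotient.mk _ = Submodule.Quotient.mk _ + _
        rw [← Submodule.Quotient.mk_add]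
        congr 1
        rw [Mv, Finsupp.smul_single, smul_eq_mul, mul_one]]
      exact Submodule.add_mem _ (Submodule.smul_mem _ _ (mem_span_inc a)) ih
  · intro l1 l2 h
    obtain ⟨S, c, h1, h2, h3⟩ := good_pair l1 l2 h
    exact ⟨S, c, h1, h2, h3⟩

end
end

section
/- Define ℤ[q,q^{-1}]-valued 'bar involution' coefficients on the rank-2 tensor space by the formulas: for r ≤ s with r+s ≠ 0, bar(M_{(r,s)}) = M_{(r,s)}; for r > s with r+s ≠ 0, bar(M_{(r,s)}) = M_{(r,s)} + (q - q^{-1}) M_{(s,r)}; for r > 0, bar(M_{(-r,r)}) = M_{(-r,r)} + Σ_{s>r} (q - q^{-1})(-q)^{r+1-s} M_{(-s,s)}; and for r > 0, bar(M_{(r,-r)}) = M_{(r,-r)} + q(q-q^{-1}) M_{(-r,r)} + Σ_{0<s<r} (q-q^{-1})(-q)^{s+1-r} M_{(s,-s)} + Σ_{s<0} q^{-1}(q-q^{-1})(-q)^{s+1-r} M_{(s,-s)} (indices r, s ranging over half-odd-integers). Then this map, extended ℚ-linearly together with q ↦ q^{-1}, is an involution on the completed space (i.e., applying it twice gives the identity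 on each M_λ). -/
noncomputable section
open Finset LaurentPolynomial

/-- Laurent polynomials `ℤ[q,q⁻¹]`. -/
abbrev Lq : Type := LaurentPolynomial ℤ

def qL : Lq := LaurentPolynomial.T 1
def qLinv : Lq := LaurentPolynomial.T (-1)

/-- `(-q)^z` for `z ∈ ℤ`. -/
def negqpow (z : ℤ) : Lq := (if Even z then 1 else -1) * LaurentPolynomial.T z

/-- The coefficient of `M_μ` in `bar(M_λ)` (indices are pairs of half-odd-integers):
`bar M_{(r,s)} = M_{(r,s)}` for `r ≤ s`, `r+s ≠ 0`;
`bar M_{(r,s)} = M_{(r,s)} + (q-q⁻¹) M_{(s,r)}` for `r > s`, `r+s ≠ 0`;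
`bar M_{(-t,t)} = M_{(-t,t)} + Σ_{u>t} (q-q⁻¹)(-q)^{t+1-u} M_{(-u,u)}` for `t > 0`;
`bar M_{(t,-t)} = M_{(t,-t)} + q(q-q⁻¹) M_{(-t,t)}
  + Σ_{0<u<t} (q-q⁻¹)(-q)^{u+1-t} M_{(u,-u)}
  + Σ_{u<0} q⁻¹(q-q⁻¹)(-q)^{u+1-t} M_{(u,-u)}` for `t > 0`. -/
def Bc (l m : HO × HO) : Lq :=
  let r := l.1; let s := l.2
  if r.val + s.val ≠ 0 then
    if r ≤ s then (if m = l then 1 else 0)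
    else (if m = l then 1 else 0) + (if m = (s, r) then qL - qLinv else 0)
  else if r.val < 0 then
    (if m = l then 1 else 0) +
      (if m.2 = HO.neg m.1 ∧ m.1.val < 0 ∧ s.val < m.2.val then
        (qL - qLinv) * negqpow ⌊s.val + 1 - m.2.val⌋ else 0)
  else
    (if m = l then 1 else 0) +
    (if m = (s, r) then qL * (qL - qLinv) else 0) +
    (if m.2 = HO.neg m.1 ∧ 0 < m.1.val ∧ m.1.val < r.val then
      (qL - qLinv) * negqpow ⌊m.1.val + 1 - r.val⌋ else 0) +
    (if m.2 = HO.neg m.1 ∧ m.1.val < 0 then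
      qLinv * (qL - qLinv) * negqpow ⌊m.1.val + 1 - r.val⌋ else 0)

/-! ### Auxiliary lemmas -/

lemma negqpow_zero : negqpow 0 = 1 := by simp [negqpow, LaurentPolynomial.T_zero]

lemma negqpow_add (x y : ℤ) : negqpow (x + y) = negqpow x * negqpow y := by
  unfold negqpow
  rw [LaurentPolynomial.T_add]
  by_cases hx : Even x <;> by_cases hy : Even y
  · rw [if_pos hx, if_pos hy, if_pos (hx.add hy)]; ring
  · rw [if_pos hx, if_neg hy, if_neg (fun h => hy ((Int.even_add.mp h).mp hx))]; ring
  · rw [if_neg hx, if_pos hy, if_neg (fun h => hx ((Int.even_add.mp h).mpr hy))]; ring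
  · rw [if_neg hx, if_neg hy, if_pos (Int.even_add.mpr (iff_of_false hx hy))]; ring

lemma qL_mul_negqpow (m : ℤ) : qL * negqpow m = -negqpow (m + 1) := by
  unfold qL negqpow
  rw [LaurentPolynomial.T_add]
  by_cases h : Even m
  · rw [if_pos h, if_neg (by simp [Int.even_add_one, h])]; ring
  · rw [if_neg h, if_pos (Int.even_add_one.mpr h)]; ring

lemma qLinv_mul_negqpow (m : ℤ) : qLinv * negqpow m = -negqpow (m - 1) := by
  unfold qLinv negqpow
  rw [LaurentPolynomial.T_sub]
  by_cases h : Even m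
  · rw [if_pos h, if_neg (by simp [Int.even_sub_one, h])]; ring
  · rw [if_neg h, if_pos (Int.even_sub_one.mpr h)]; ring

lemma P_mul_negqpow (m : ℤ) :
    (qL - qLinv) * negqpow m = negqpow (m - 1) - negqpow (m + 1) := by
  rw [sub_mul, qL_mul_negqpow, qLinv_mul_negqpow]; ring

lemma invert_negqpow (z : ℤ) : LaurentPolynomial.invert (negqpow z) = negqpow (-z) := by
  unfold negqpow
  rw [map_mul]
  by_cases h : Even z <;> simp [h, even_neg]

lemma invert_qL : LaurentPolynomial.invert qL = qLinv := by simp [qL, qLinv]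

lemma invert_qLinv : LaurentPolynomial.invert qLinv = qL := by simp [qL, qLinv]

lemma invert_P : LaurentPolynomial.invert (qL - qLinv) = -(qL - qLinv) := by
  rw [map_sub, invert_qL, invert_qLinv]; ring
lemma Icc_succ_top' {x y : ℤ} (h : x ≤ y + 1) :
    Finset.Icc x (y + 1) = insert (y + 1) (Finset.Icc x y) := by
  ext k; simp only [Finset.mem_Icc, Finset.mem_insert]; omega

lemma tele_up (c x : ℤ) : ∀ y : ℤ, x - 1 ≤ y →
    (qL - qLinv) * ∑ k ∈ Finset.Icc x y, negqpow (c + 2*k)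
      = negqpow (c + 2*x - 1) - negqpow (c + 2*y + 1) := by
  refine Int.le_induction ?_ ?_
  · rw [Finset.Icc_eq_empty (by omega), Finset.sum_empty, mul_zero,
      show c + 2*(x-1) + 1 = c + 2*x - 1 by ring, sub_self]
  · intro n hn ih
    rw [Icc_succ_top' (by omega), Finset.sum_insert (by simp), mul_add, ih,
      P_mul_negqpow]
    rw [show c + 2*(n+1) - 1 = c + 2*n + 1 by ring,
      show c + 2*(n+1) + 1 = c + 2*n + 1 + 2 by ring]
    ring

lemma tele_down (c x : ℤ) : ∀ y : ℤ, x - 1 ≤ y →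
    (qL - qLinv) * ∑ k ∈ Finset.Icc x y, negqpow (c - 2*k)
      = negqpow (c - 2*y - 1) - negqpow (c - 2*x + 1) := by
  refine Int.le_induction ?_ ?_
  · rw [Finset.Icc_eq_empty (by omega), Finset.sum_empty, mul_zero,
      show c - 2*(x-1) - 1 = c - 2*x + 1 by ring, sub_self]
  · intro n hn ih
    rw [Icc_succ_top' (by omega), Finset.sum_insert (by simp), mul_add, ih,
      P_mul_negqpow]
    rw [show c - 2*(n+1) - 1 = c - 2*n - 1 - 2 by ring, show c - 2*(n+1) = c - 2*n - 2 by ring,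
      show c - 2*n - 2 + 1 = c - 2*n - 1 by ring]
    ring
/-- Integer model of `Bc`. -/
def Bc' (l m : ℤ × ℤ) : Lq :=
  if l.1 + l.2 ≠ -1 then
    if l.1 ≤ l.2 then (if m = l then 1 else 0)
    else (if m = l then 1 else 0) + (if m = (l.2, l.1) then qL - qLinv else 0)
  else if l.1 < 0 then
    (if m = l then 1 else 0) +
      (if m.2 = -1 - m.1 ∧ m.1 < 0 ∧ l.2 < m.2 then
        (qL - qLinv) * negqpow (l.2 + 1 - m.2) else 0)
  else
    (if m = l then 1 else 0) +
    (if m = (l.2, l.1) then qL * (qL - qLinv) else 0) +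
    (if m.2 = -1 - m.1 ∧ 0 ≤ m.1 ∧ m.1 < l.1 then
      (qL - qLinv) * negqpow (m.1 + 1 - l.1) else 0) +
    (if m.2 = -1 - m.1 ∧ m.1 < 0 then
      qLinv * (qL - qLinv) * negqpow (m.1 + 1 - l.1) else 0)

lemma Bc'_A_eval {a b : ℤ} (h1 : a + b ≠ -1) (h2 : a ≤ b) (m : ℤ × ℤ) :
    Bc' (a, b) m = if m = (a, b) then 1 else 0 := by
  simp only [Bc', if_pos h1, if_pos h2]

lemma Bc'_B_eval {a b : ℤ} (h1 : a + b ≠ -1) (h2 : b < a) (m : ℤ × ℤ) :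
    Bc' (a, b) m = (if m = (a, b) then 1 else 0) +
      (if m = (b, a) then qL - qLinv else 0) := by
  simp only [Bc', if_pos h1, if_neg (not_le.mpr h2)]

lemma Bc'_C_eval {b : ℤ} (hb : 0 ≤ b) (j k : ℤ) :
    Bc' (-1 - b, b) (j, k) = (if j = -1 - k ∧ k = b then 1 else 0) +
      (if j = -1 - k ∧ b < k then (qL - qLinv) * negqpow (b + 1 - k) else 0) := by
  simp only [Bc', Prod.mk.injEq]
  rw [if_neg (show ¬ (-1 - b + b ≠ -1) by omega), if_pos (show (-1 : ℤ) - b < 0 by omega)]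
  exact congrArg₂ (· + ·) (if_congr (by omega) rfl rfl) (if_congr (by omega) rfl rfl)

lemma Bc'_D_eval {a : ℤ} (ha : 0 ≤ a) (j k : ℤ) :
    Bc' (a, -1 - a) (j, k) =
      (if j = a ∧ k = -1 - a then 1 else 0) +
      (if j = -1 - a ∧ k = a then qL * (qL - qLinv) else 0) +
      (if k = -1 - j ∧ 0 ≤ j ∧ j < a then (qL - qLinv) * negqpow (j + 1 - a) else 0) +
      (if k = -1 - j ∧ j < 0 then qLinv * (qL - qLinv) * negqpow (j + 1 - a) else 0) := by
  simp only [Bc', Prod.mk.injEq]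
  rw [if_neg (show ¬ (a + (-1 - a) ≠ -1) by omega), if_neg (show ¬ ((a : ℤ) < 0) by omega)]
lemma invert_Bc'_C_eval {b : ℤ} (hb : 0 ≤ b) (j k : ℤ) :
    LaurentPolynomial.invert (Bc' (-1 - b, b) (j, k)) =
      (if j = -1 - k ∧ k = b then 1 else 0) +
      (if j = -1 - k ∧ b < k then -(qL - qLinv) * negqpow (k - b - 1) else 0) := by
  rw [Bc'_C_eval hb, map_add, apply_ite (LaurentPolynomial.invert : Lq → Lq),
    apply_ite (LaurentPolynomial.invert : Lq → Lq), map_one, map_zero, map_mul,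
    invert_P, invert_negqpow, show -(b + 1 - k) = k - b - 1 by ring]

lemma invert_Bc'_D_eval {a : ℤ} (ha : 0 ≤ a) (j k : ℤ) :
    LaurentPolynomial.invert (Bc' (a, -1 - a) (j, k)) =
      (if j = a ∧ k = -1 - a then 1 else 0) +
      (if j = -1 - a ∧ k = a then qLinv * -(qL - qLinv) else 0) +
      (if k = -1 - j ∧ 0 ≤ j ∧ j < a then -(qL - qLinv) * negqpow (a - 1 - j) else 0) +
      (if k = -1 - j ∧ j < 0 then qL * -(qL - qLinv) * negqpow (a - 1 - j) else 0) := by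
  rw [Bc'_D_eval ha, map_add, map_add, map_add,
    apply_ite (LaurentPolynomial.invert : Lq → Lq),
    apply_ite (LaurentPolynomial.invert : Lq → Lq),
    apply_ite (LaurentPolynomial.invert : Lq → Lq),
    apply_ite (LaurentPolynomial.invert : Lq → Lq),
    map_one, map_zero, map_mul, map_mul, map_mul, map_mul,
    invert_P, invert_negqpow, invert_qL, invert_qLinv,
    show -(j + 1 - a) = a - 1 - j by ring]
lemma invert_Bc'_A_eval {a b : ℤ} (h1 : a + b ≠ -1) (h2 : a ≤ b) (m : ℤ × ℤ) :
    LaurentPolynomial.invert (Bc' (a, b) m) = if m = (a, b) then 1 else 0 := by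
  rw [Bc'_A_eval h1 h2, apply_ite (LaurentPolynomial.invert : Lq → Lq), map_one, map_zero]

lemma invert_Bc'_B_eval {a b : ℤ} (h1 : a + b ≠ -1) (h2 : b < a) (m : ℤ × ℤ) :
    LaurentPolynomial.invert (Bc' (a, b) m) = (if m = (a, b) then 1 else 0) +
      (if m = (b, a) then -(qL - qLinv) else 0) := by
  rw [Bc'_B_eval h1 h2, map_add, apply_ite (LaurentPolynomial.invert : Lq → Lq),
    apply_ite (LaurentPolynomial.invert : Lq → Lq), map_one, map_zero, invert_P]

lemma main_int (a b c d : ℤ) :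
    ∑ᶠ p : ℤ × ℤ, LaurentPolynomial.invert (Bc' (a, b) p) * Bc' p (c, d)
      = if (a, b) = ((c, d) : ℤ × ℤ) then 1 else 0 := by
  rcases ne_or_eq (a + b) (-1) with h1 | h1
  · rcases le_or_gt a b with h2 | h2
    · rw [finsum_eq_single _ ((a, b) : ℤ × ℤ)
        (fun p hp => by rw [invert_Bc'_A_eval h1 h2, if_neg hp, zero_mul])]
      rw [invert_Bc'_A_eval h1 h2, if_pos rfl, one_mul, Bc'_A_eval h1 h2]
      exact if_congr eq_comm rfl rfl
    · have hne : ((a, b) : ℤ × ℤ) ≠ (b, a) := by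
        simp only [Ne, Prod.mk.injEq]; omega
      have hsupp : Function.support
          (fun p => LaurentPolynomial.invert (Bc' (a, b) p) * Bc' p (c, d))
          ⊆ (({(a, b), (b, a)} : Finset (ℤ × ℤ)) : Set (ℤ × ℤ)) := by
        intro p hp
        simp only [Function.mem_support] at hp
        by_contra hmem
        simp only [Finset.coe_insert, Finset.coe_singleton, Set.mem_insert_iff,
          Set.mem_singleton_iff, not_or] at hmem
        exact hp (by rw [invert_Bc'_B_eval h1 h2, if_neg hmem.1, if_neg hmem.2,
          add_zero, zero_mul])
      rw [finsum_eq_finset_sum_of_support_subset _ hsupp, Finset.sum_pair hne,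
        invert_Bc'_B_eval h1 h2, invert_Bc'_B_eval h1 h2,
        Bc'_B_eval h1 h2, Bc'_A_eval (by omega) (le_of_lt h2)]
      rw [if_pos rfl, if_neg hne, if_neg (Ne.symm hne), if_pos rfl]
      by_cases h3 : ((c, d) : ℤ × ℤ) = (a, b) <;> by_cases h4 : ((c, d) : ℤ × ℤ) = (b, a)
      · exact absurd (h3.symm.trans h4) hne
      · rw [if_pos h3, if_neg h4, if_neg h4, if_pos h3.symm]; ring
      · rw [if_neg h3, if_pos h4, if_pos h4, if_neg (fun h => h3 h.symm)]; ring
      · rw [if_neg h3, if_neg h4, if_neg h4, if_neg (fun h => h3 h.symm)]; ring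
  · rcases lt_or_ge a 0 with h2 | h2
    · -- case C
      obtain rfl : a = -1 - b := by omega
      have hb : (0 : ℤ) ≤ b := by omega
      set S : Finset (ℤ × ℤ) :=
        insert ((-1 : ℤ) - b, b) ((Finset.Icc (b+1) d).image fun k => ((-1 - k : ℤ), k)) with hS
      have hsupp : Function.support
          (fun p : ℤ × ℤ => LaurentPolynomial.invert (Bc' (-1 - b, b) p) * Bc' p (c, d))
          ⊆ (S : Set (ℤ × ℤ)) := by
        rintro ⟨j, k⟩ hp
        simp only [Function.mem_support] at hp
        by_contra hmem
        apply hp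
        simp only [hS, Finset.coe_insert, Set.mem_insert_iff, Finset.coe_image,
          Set.mem_image, Finset.mem_coe, Finset.mem_Icc, Prod.mk.injEq, not_or,
          not_exists, not_and] at hmem
        rw [invert_Bc'_C_eval hb]
        by_cases hjk : j = -1 - k
        · by_cases hbk : b < k
          · have hkd : d < k := by
              have h5 := hmem.2 k
              omega
            have h2f : Bc' (j, k) (c, d) = 0 := by
              have hjk' : (j, k) = ((-1 - k : ℤ), k) := by rw [hjk]
              rw [hjk', Bc'_C_eval (by omega : (0:ℤ) ≤ k), if_neg (by omega),
                if_neg (by omega), add_zero]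
            rw [h2f, mul_zero]
          · rw [if_neg (by omega), if_neg (by omega), add_zero, zero_mul]
        · rw [if_neg (by omega), if_neg (by omega), add_zero, zero_mul]
      rw [finsum_eq_finset_sum_of_support_subset _ hsupp, hS,
        Finset.sum_insert (by simp only [Finset.mem_image, Finset.mem_Icc, Prod.mk.injEq,
          not_exists, not_and]; intro x; omega),
        Finset.sum_image (by intro x _ y _ h; exact (Prod.ext_iff.mp h).2)]
      rw [invert_Bc'_C_eval hb, if_pos ⟨by omega, rfl⟩, if_neg (by omega), add_zero, one_mul,
        Bc'_C_eval hb c d]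
      have hterm : ∀ k ∈ Finset.Icc (b+1) d,
          LaurentPolynomial.invert (Bc' (-1 - b, b) (-1 - k, k)) * Bc' (-1 - k, k) (c, d)
            = -(qL - qLinv) * negqpow (k - b - 1) *
              ((if c = -1 - d ∧ d = k then 1 else 0) +
                (if c = -1 - d ∧ k < d then (qL - qLinv) * negqpow (k + 1 - d) else 0)) := by
        intro k hk
        simp only [Finset.mem_Icc] at hk
        rw [invert_Bc'_C_eval hb, if_neg (by omega), if_pos ⟨rfl, by omega⟩, zero_add,
          Bc'_C_eval (by omega : (0:ℤ) ≤ k) c d]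
      rw [Finset.sum_congr rfl hterm]
      by_cases hc : c = -1 - d
      · subst hc
        simp only [eq_self_iff_true, true_and]
        rcases lt_trichotomy d b with hdb | rfl | hdb
        · rw [Finset.Icc_eq_empty (by omega), Finset.sum_empty, if_neg (by omega),
            if_neg (by omega), if_neg (by intro hE; rw [Prod.mk.injEq] at hE; omega)]
          norm_num
        · rw [if_pos rfl, if_neg (lt_irrefl _), Finset.Icc_eq_empty (by omega),
            Finset.sum_empty, if_pos rfl]
          norm_num
        · have hsplit : Finset.Icc (b+1) d = insert d (Finset.Icc (b+1) (d-1)) := by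
            ext x; simp only [Finset.mem_Icc, Finset.mem_insert]; omega
          rw [hsplit, Finset.sum_insert (by simp only [Finset.mem_Icc]; omega),
            if_pos rfl, if_neg (lt_irrefl d)]
          have hcong : ∀ k ∈ Finset.Icc (b+1) (d-1),
              -(qL - qLinv) * negqpow (k - b - 1) *
                ((if d = k then 1 else 0) +
                  (if k < d then (qL - qLinv) * negqpow (k + 1 - d) else 0))
              = -((qL - qLinv) * ((qL - qLinv) * negqpow (-b - d + 2*k))) := by
            intro k hk
            simp only [Finset.mem_Icc] at hk
            rw [if_neg (by omega), if_pos (by omega), zero_add]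
            have hnn : negqpow (k - b - 1) * negqpow (k + 1 - d) = negqpow (-b - d + 2*k) := by
              rw [← negqpow_add]; congr 1; ring
            rw [← hnn]; ring
          rw [Finset.sum_congr rfl hcong, Finset.sum_neg_distrib, ← Finset.mul_sum, ← Finset.mul_sum]
          have htel := tele_up (-b - d) (b+1) (d-1) (by omega)
          rw [show -b - d + 2*(b+1) - 1 = b + 1 - d by ring,
            show -b - d + 2*(d-1) + 1 = d - b - 1 by ring] at htel
          rw [htel, if_neg (show ¬ d = b by omega), if_pos hdb,
            if_neg (by intro hE; rw [Prod.mk.injEq] at hE; omega)]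
          ring
      · rw [if_neg (by tauto), if_neg (by tauto),
          Finset.sum_eq_zero (fun k hk => by
            rw [if_neg (by tauto), if_neg (by tauto), add_zero, mul_zero]),
          if_neg (by intro hE; rw [Prod.mk.injEq] at hE; omega)]
        norm_num
    · -- case D
      obtain rfl : b = -1 - a := by omega
      set S : Finset (ℤ × ℤ) :=
        insert ((a : ℤ), -1 - a)
          (((Finset.Icc 0 (a-1)).image fun j => ((j : ℤ), -1 - j)) ∪
            ((Finset.Icc 0 (max a d)).image fun w => ((-1 - w : ℤ), w))) with hS
      have hsupp : Function.support
          (fun p : ℤ × ℤ => LaurentPolynomial.invert (Bc' (a, -1 - a) p) * Bc' p (c, d))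
          ⊆ (S : Set (ℤ × ℤ)) := by
        rintro ⟨j, k⟩ hp
        simp only [Function.mem_support] at hp
        by_contra hmem
        apply hp
        simp only [hS, Finset.coe_insert, Set.mem_insert_iff, Finset.coe_union,
          Finset.coe_image, Set.mem_union, Set.mem_image, Finset.mem_coe, Finset.mem_Icc,
          Prod.mk.injEq, not_or, not_exists, not_and] at hmem
        rw [invert_Bc'_D_eval h2]
        by_cases hjk : k = -1 - j
        · by_cases hj : 0 ≤ j
          · have h5 := hmem.2.1 j
            rw [if_neg (by omega), if_neg (by omega), if_neg (by omega), if_neg (by omega)]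
            norm_num
          · have h5 := hmem.2.2 (-1 - j)
            have h6 := le_max_left a d
            have h7 := le_max_right a d
            have h2f : Bc' (j, k) (c, d) = 0 := by
              have hjk' : (j, k) = ((-1 - (-1 - j) : ℤ), -1 - j) := by
                rw [hjk]; congr 1; ring
              rw [hjk', Bc'_C_eval (by omega : (0:ℤ) ≤ -1 - j) c d,
                if_neg (by omega), if_neg (by omega), add_zero]
            rw [h2f, mul_zero]
        · rw [if_neg (by omega), if_neg (by omega), if_neg (by omega), if_neg (by omega)]
          norm_num
      have hl : ((a : ℤ), -1 - a) ∉
          (((Finset.Icc 0 (a-1)).image fun j => ((j : ℤ), -1 - j)) ∪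
            ((Finset.Icc 0 (max a d)).image fun w => ((-1 - w : ℤ), w))) := by
        intro h
        simp only [Finset.mem_union, Finset.mem_image, Finset.mem_Icc, Prod.mk.injEq] at h
        obtain ⟨x, h5, h6, h7⟩ | ⟨x, h5, h6, h7⟩ := h <;> omega
      have hdisj : Disjoint ((Finset.Icc 0 (a-1)).image fun j => ((j : ℤ), -1 - j))
          ((Finset.Icc 0 (max a d)).image fun w => ((-1 - w : ℤ), w)) := by
        rw [Finset.disjoint_left]
        rintro ⟨u, v⟩ hu hv
        simp only [Finset.mem_image, Finset.mem_Icc, Prod.mk.injEq] at hu hv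
        obtain ⟨x, h5, h6, h7⟩ := hu
        obtain ⟨y, h8, h9, h10⟩ := hv
        omega
      rw [finsum_eq_finset_sum_of_support_subset _ hsupp, hS, Finset.sum_insert hl,
        Finset.sum_union hdisj,
        Finset.sum_image (fun x _ y _ h => (Prod.ext_iff.mp h).1),
        Finset.sum_image (fun x _ y _ h => (Prod.ext_iff.mp h).2)]
      rw [invert_Bc'_D_eval h2 a (-1-a), if_pos ⟨rfl, rfl⟩, if_neg (by omega),
        if_neg (by omega), if_neg (by omega), Bc'_D_eval h2 c d]
      have hterm1 : ∀ j ∈ Finset.Icc (0:ℤ) (a-1),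
          LaurentPolynomial.invert (Bc' (a, -1 - a) (j, -1 - j)) * Bc' (j, -1 - j) (c, d)
            = -(qL - qLinv) * negqpow (a - 1 - j) *
              ((if c = j ∧ d = -1 - j then 1 else 0) +
               (if c = -1 - j ∧ d = j then qL * (qL - qLinv) else 0) +
               (if d = -1 - c ∧ 0 ≤ c ∧ c < j then (qL - qLinv) * negqpow (c + 1 - j) else 0) +
               (if d = -1 - c ∧ c < 0 then qLinv * (qL - qLinv) * negqpow (c + 1 - j) else 0)) := by
        intro j hj
        simp only [Finset.mem_Icc] at hj
        rw [invert_Bc'_D_eval h2 j (-1-j), if_neg (by omega), if_neg (by omega),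
          if_pos (show (-1:ℤ) - j = -1 - j ∧ 0 ≤ j ∧ j < a by omega), if_neg (by omega),
          zero_add, zero_add, add_zero, Bc'_D_eval (by omega : (0:ℤ) ≤ j) c d]
      have hterm2 : ∀ w ∈ Finset.Icc (0:ℤ) (max a d),
          LaurentPolynomial.invert (Bc' (a, -1 - a) (-1 - w, w)) * Bc' (-1 - w, w) (c, d)
            = ((if w = a then qLinv * -(qL - qLinv) else 0) +
                qL * -(qL - qLinv) * negqpow (a + w)) *
              ((if c = -1 - d ∧ d = w then 1 else 0) +
               (if c = -1 - d ∧ w < d then (qL - qLinv) * negqpow (w + 1 - d) else 0)) := by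
        intro w hw
        simp only [Finset.mem_Icc] at hw
        rw [invert_Bc'_D_eval h2 (-1-w) w,
          if_neg (show ¬((-1:ℤ) - w = a ∧ w = -1 - a) by omega),
          if_congr (show ((-1:ℤ) - w = -1 - a ∧ w = a) ↔ w = a by omega) rfl rfl,
          if_neg (show ¬(w = -1 - (-1 - w) ∧ 0 ≤ -1 - w ∧ -1 - w < a) by omega),
          if_pos (show w = -1 - (-1 - w) ∧ (-1:ℤ) - w < 0 by omega),
          show a - 1 - (-1 - w) = a + w by ring, zero_add, add_zero,
          Bc'_C_eval (by omega : (0:ℤ) ≤ w) c d]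
      rw [Finset.sum_congr rfl hterm1, Finset.sum_congr rfl hterm2]
      by_cases hcd : c + d = -1
      · by_cases hcs : c < 0
        · obtain rfl : c = -1 - d := by omega
          have hd : (0:ℤ) ≤ d := by omega
          rw [if_neg (show ¬((-1:ℤ) - d = a ∧ d = -1 - a) by omega),
            if_congr (show ((-1:ℤ) - d = -1 - a ∧ d = a) ↔ d = a by omega) rfl rfl,
            if_neg (show ¬(d = -1 - (-1 - d) ∧ 0 ≤ -1 - d ∧ -1 - d < a) by omega),
            if_pos (show d = -1 - (-1 - d) ∧ (-1:ℤ) - d < 0 by omega),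
            show (-1:ℤ) - d + 1 - a = -a - d by ring]
          have hj1 : ∀ j ∈ Finset.Icc (0:ℤ) (a-1),
              -(qL - qLinv) * negqpow (a - 1 - j) *
                ((((if -1 - d = j ∧ d = -1 - j then 1 else 0) +
                    if -1 - d = -1 - j ∧ d = j then qL * (qL - qLinv) else 0) +
                  if d = -1 - (-1 - d) ∧ 0 ≤ -1 - d ∧ -1 - d < j then
                    (qL - qLinv) * negqpow (-1 - d + 1 - j) else 0) +
                  if d = -1 - (-1 - d) ∧ -1 - d < 0 then
                    qLinv * (qL - qLinv) * negqpow (-1 - d + 1 - j) else 0)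
              = (if d = j then -(qL - qLinv) * negqpow (a - 1 - j) * (qL * (qL - qLinv)) else 0)
                + -(qLinv * ((qL - qLinv) * ((qL - qLinv) * negqpow (a - 1 - d - 2*j)))) := by
            intro j hj
            simp only [Finset.mem_Icc] at hj
            rw [if_neg (show ¬((-1:ℤ) - d = j ∧ d = -1 - j) by omega),
              if_congr (show ((-1:ℤ) - d = -1 - j ∧ d = j) ↔ d = j by omega) rfl rfl,
              if_neg (show ¬(d = -1 - (-1 - d) ∧ 0 ≤ -1 - d ∧ -1 - d < j) by omega),
              if_pos (show d = -1 - (-1 - d) ∧ (-1:ℤ) - d < 0 by omega),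
              show (-1:ℤ) - d + 1 - j = -d - j by ring, zero_add, add_zero, mul_add]
            congr 1
            · rw [mul_ite, mul_zero]
            · have hnn : negqpow (a - 1 - j) * negqpow (-d - j)
                  = negqpow (a - 1 - d - 2*j) := by
                rw [← negqpow_add]; congr 1; ring
              rw [← hnn]; ring
          rw [Finset.sum_congr rfl hj1, Finset.sum_add_distrib, Finset.sum_ite_eq,
            Finset.sum_neg_distrib, ← Finset.mul_sum, ← Finset.mul_sum, ← Finset.mul_sum]
          have htd := tele_down (a - 1 - d) 0 (a-1) (by omega)
          rw [show a - 1 - d - 2*(a-1) - 1 = -a - d by ring,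
            show a - 1 - d - 2*0 + 1 = a - d by ring] at htd
          rw [htd]
          have hw1 : ∀ w ∈ Finset.Icc (0:ℤ) (max a d),
              ((if w = a then qLinv * -(qL - qLinv) else 0) +
                  qL * -(qL - qLinv) * negqpow (a + w)) *
                ((if -1 - d = -1 - d ∧ d = w then 1 else 0) +
                  if -1 - d = -1 - d ∧ w < d then (qL - qLinv) * negqpow (w + 1 - d) else 0)
              = (if d = w then ((if w = a then qLinv * -(qL - qLinv) else 0) +
                    qL * -(qL - qLinv) * negqpow (a + w)) else 0)
                + (if w < d then ((if w = a then qLinv * -(qL - qLinv) else 0) +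
                    qL * -(qL - qLinv) * negqpow (a + w)) *
                    ((qL - qLinv) * negqpow (w + 1 - d)) else 0) := by
            intro w hw
            rw [if_congr (show ((-1:ℤ) - d = -1 - d ∧ d = w) ↔ d = w by omega) rfl rfl,
              if_congr (show ((-1:ℤ) - d = -1 - d ∧ w < d) ↔ w < d by omega) rfl rfl,
              mul_add, mul_ite, mul_one, mul_zero, mul_ite, mul_zero]
          rw [Finset.sum_congr rfl hw1, Finset.sum_add_distrib, Finset.sum_ite_eq,
            if_pos (Finset.mem_Icc.mpr ⟨hd, le_max_right a d⟩)]
          have hres : ∑ w ∈ Finset.Icc (0:ℤ) (max a d),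
                (if w < d then ((if w = a then qLinv * -(qL - qLinv) else 0) +
                  qL * -(qL - qLinv) * negqpow (a + w)) *
                  ((qL - qLinv) * negqpow (w + 1 - d)) else 0)
              = ∑ w ∈ Finset.Icc (0:ℤ) (d-1),
                ((if w = a then qLinv * -(qL - qLinv) * ((qL - qLinv) * negqpow (w + 1 - d)) else 0)
                  + -(qL * ((qL - qLinv) * ((qL - qLinv) * negqpow (a + 1 - d + 2*w))))) := by
            rw [← Finset.sum_subset
              (show Finset.Icc (0:ℤ) (d-1) ⊆ Finset.Icc (0:ℤ) (max a d) by
                intro x hx; simp only [Finset.mem_Icc] at hx ⊢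
                exact ⟨hx.1, le_trans (by omega) (le_max_right a d)⟩)
              (fun x hx hnx => by
                simp only [Finset.mem_Icc] at hx hnx
                exact if_neg (by omega))]
            refine Finset.sum_congr rfl (fun w hw => ?_)
            simp only [Finset.mem_Icc] at hw
            rw [if_pos (by omega), add_mul, ite_mul, zero_mul]
            have hnn : negqpow (a + w) * negqpow (w + 1 - d)
                = negqpow (a + 1 - d + 2*w) := by
              rw [← negqpow_add]; congr 1; ring
            rw [← hnn]; ring
          rw [hres, Finset.sum_add_distrib, Finset.sum_ite_eq',
            Finset.sum_neg_distrib, ← Finset.mul_sum, ← Finset.mul_sum, ← Finset.mul_sum]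
          have htu := tele_up (a + 1 - d) 0 (d-1) (by omega)
          rw [show a + 1 - d + 2*0 - 1 = a - d by ring,
            show a + 1 - d + 2*(d-1) + 1 = a + d by ring] at htu
          rw [htu, if_neg (show ¬ ((a, -1 - a) = ((-1 - d : ℤ), d)) from
            by intro hE; rw [Prod.mk.injEq] at hE; omega)]
          rcases lt_trichotomy a d with had | had | had
          · rw [if_neg (show ¬ d = a by omega), if_neg (show ¬ d = a by omega),
              if_neg (show d ∉ Finset.Icc (0:ℤ) (a-1) by
                simp only [Finset.mem_Icc]; omega),
              if_pos (show a ∈ Finset.Icc (0:ℤ) (d-1) by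
                simp only [Finset.mem_Icc]; omega)]
            have hB := qLinv_mul_negqpow (a + 1 - d)
            rw [show a + 1 - d - 1 = a - d by ring] at hB
            linear_combination (-(qL - qLinv) * (qL - qLinv)) * hB
          · rw [if_pos had.symm, if_pos had.symm,
              if_neg (show d ∉ Finset.Icc (0:ℤ) (a-1) by
                simp only [Finset.mem_Icc]; omega),
              if_neg (show a ∉ Finset.Icc (0:ℤ) (d-1) by
                simp only [Finset.mem_Icc]; omega),
              show a - d = 0 by omega, negqpow_zero]
            ring
          · rw [if_neg (show ¬ d = a by omega), if_neg (show ¬ d = a by omega),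
              if_pos (show d ∈ Finset.Icc (0:ℤ) (a-1) by
                simp only [Finset.mem_Icc]; omega),
              if_neg (show a ∉ Finset.Icc (0:ℤ) (d-1) by
                simp only [Finset.mem_Icc]; omega)]
            have hA := qL_mul_negqpow (a - 1 - d)
            rw [show a - 1 - d + 1 = a - d by ring] at hA
            linear_combination (-(qL - qLinv) * (qL - qLinv)) * hA

        · obtain rfl : d = -1 - c := by omega
          rw [if_congr (show (c = a ∧ -1 - c = -1 - a) ↔ c = a by omega) rfl rfl,
            if_neg (show ¬(c = -1 - a ∧ -1 - c = a) by omega),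
            if_congr (show ((-1:ℤ) - c = -1 - c ∧ 0 ≤ c ∧ c < a) ↔ c < a by omega) rfl rfl,
            if_neg (show ¬((-1:ℤ) - c = -1 - c ∧ c < 0) by omega)]
          have hz2 : ∑ w ∈ Finset.Icc (0:ℤ) (max a (-1 - c)),
              ((if w = a then qLinv * -(qL - qLinv) else 0) +
                  qL * -(qL - qLinv) * negqpow (a + w)) *
                ((if c = -1 - (-1 - c) ∧ -1 - c = w then 1 else 0) +
                  if c = -1 - (-1 - c) ∧ w < -1 - c then
                    (qL - qLinv) * negqpow (w + 1 - (-1 - c)) else 0) = 0 :=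
            Finset.sum_eq_zero (fun w hw => by
              rw [if_neg (show ¬(c = -1 - (-1 - c) ∧ -1 - c = w) by
                  simp only [Finset.mem_Icc] at hw; omega),
                if_neg (show ¬(c = -1 - (-1 - c) ∧ w < -1 - c) by
                  simp only [Finset.mem_Icc] at hw; omega)]
              norm_num)
          rw [hz2]
          have hj1 : ∀ j ∈ Finset.Icc (0:ℤ) (a-1),
              -(qL - qLinv) * negqpow (a - 1 - j) *
                ((((if c = j ∧ -1 - c = -1 - j then 1 else 0) +
                    if c = -1 - j ∧ -1 - c = j then qL * (qL - qLinv) else 0) +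
                  if -1 - c = -1 - c ∧ 0 ≤ c ∧ c < j then
                    (qL - qLinv) * negqpow (c + 1 - j) else 0) +
                  if -1 - c = -1 - c ∧ c < 0 then
                    qLinv * (qL - qLinv) * negqpow (c + 1 - j) else 0)
              = (if c = j then -(qL - qLinv) * negqpow (a - 1 - j) else 0)
                + (if c < j then
                    -((qL - qLinv) * ((qL - qLinv) * negqpow (a + c - 2*j))) else 0) := by
            intro j hj
            simp only [Finset.mem_Icc] at hj
            rw [if_congr (show (c = j ∧ -1 - c = -1 - j) ↔ c = j by omega) rfl rfl,
              if_neg (show ¬(c = -1 - j ∧ -1 - c = j) by omega),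
              if_congr (show ((-1:ℤ) - c = -1 - c ∧ 0 ≤ c ∧ c < j) ↔ c < j by omega) rfl rfl,
              if_neg (show ¬((-1:ℤ) - c = -1 - c ∧ c < 0) by omega),
              add_zero, add_zero, mul_add, mul_ite, mul_one, mul_zero, mul_ite, mul_zero]
            have hnn : negqpow (a - 1 - j) * negqpow (c + 1 - j)
                = negqpow (a + c - 2*j) := by
              rw [← negqpow_add]; congr 1; ring
            have e2 : -(qL - qLinv) * negqpow (a - 1 - j) * ((qL - qLinv) * negqpow (c + 1 - j))
                = -((qL - qLinv) * ((qL - qLinv) * negqpow (a + c - 2*j))) := by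
              rw [← hnn]; ring
            rw [e2]
          rw [Finset.sum_congr rfl hj1, Finset.sum_add_distrib, Finset.sum_ite_eq]
          have hres : ∑ j ∈ Finset.Icc (0:ℤ) (a-1),
                (if c < j then
                  -((qL - qLinv) * ((qL - qLinv) * negqpow (a + c - 2*j))) else 0)
              = ∑ j ∈ Finset.Icc (c+1) (a-1),
                -((qL - qLinv) * ((qL - qLinv) * negqpow (a + c - 2*j))) := by
            rw [← Finset.sum_subset
              (show Finset.Icc (c+1) (a-1) ⊆ Finset.Icc (0:ℤ) (a-1) by
                intro x hx; simp only [Finset.mem_Icc] at hx ⊢; omega)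
              (fun x hx hnx => by
                simp only [Finset.mem_Icc] at hx hnx
                exact if_neg (by omega))]
            exact Finset.sum_congr rfl (fun j hj => by
              simp only [Finset.mem_Icc] at hj
              exact if_pos (by omega))
          rw [hres, Finset.sum_neg_distrib, ← Finset.mul_sum, ← Finset.mul_sum]
          by_cases hca : c < a
          · have htd := tele_down (a + c) (c+1) (a-1) (by omega)
            rw [show a + c - 2*(a-1) - 1 = c + 1 - a by ring,
              show a + c - 2*(c+1) + 1 = a - 1 - c by ring] at htd
            rw [htd, if_pos (show c ∈ Finset.Icc (0:ℤ) (a-1) by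
                simp only [Finset.mem_Icc]; omega),
              if_neg (show ¬ c = a by omega), if_pos hca,
              if_neg (show ¬ ((a, -1 - a) = ((c : ℤ), -1 - c)) from
                by intro hE; rw [Prod.mk.injEq] at hE; omega)]
            ring
          · rw [Finset.Icc_eq_empty (show ¬ (c+1 ≤ a-1) by omega), Finset.sum_empty,
              mul_zero, mul_zero, neg_zero,
              if_neg (show c ∉ Finset.Icc (0:ℤ) (a-1) by
                simp only [Finset.mem_Icc]; omega),
              if_neg hca]
            by_cases hceq : c = a
            · subst hceq
              rw [if_pos rfl, if_pos rfl]
              norm_num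
            · rw [if_neg hceq,
                if_neg (show ¬ ((a, -1 - a) = ((c : ℤ), -1 - c)) from
                  by intro hE; rw [Prod.mk.injEq] at hE; omega)]
              norm_num

      · rw [if_neg (show ¬(c = a ∧ d = -1 - a) by omega),
          if_neg (show ¬(c = -1 - a ∧ d = a) by omega),
          if_neg (show ¬(d = -1 - c ∧ 0 ≤ c ∧ c < a) by omega),
          if_neg (show ¬(d = -1 - c ∧ c < 0) by omega),
          Finset.sum_eq_zero (fun j hj => by
            rw [if_neg (show ¬(c = j ∧ d = -1 - j) by omega),
              if_neg (show ¬(c = -1 - j ∧ d = j) by omega),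
              if_neg (show ¬(d = -1 - c ∧ 0 ≤ c ∧ c < j) by omega),
              if_neg (show ¬(d = -1 - c ∧ c < 0) by omega)]
            norm_num),
          Finset.sum_eq_zero (fun w hw => by
            rw [if_neg (show ¬(c = -1 - d ∧ d = w) by omega),
              if_neg (show ¬(c = -1 - d ∧ w < d) by omega)]
            norm_num),
          if_neg (by intro hE; rw [Prod.mk.injEq] at hE; omega)]
        norm_num

/-- The integers enumerate the half-odd-integers. -/
def eHO : ℤ ≃ HO where
  toFun k := ⟨(k : ℚ) + 1/2, ⟨k, rfl⟩⟩
  invFun r := ⌊r.val⌋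
  left_inv k := by
    simp only
    rw [Int.floor_intCast_add]
    norm_num
  right_inv r := by
    obtain ⟨x, n, rfl⟩ := r
    apply Subtype.ext
    simp only
    rw [Int.floor_intCast_add]
    norm_num

lemma eHO_val (k : ℤ) : (eHO k).val = (k : ℚ) + 1/2 := rfl

lemma eHO_neg (j : ℤ) : HO.neg (eHO j) = eHO (-1 - j) := by
  apply Subtype.ext
  show -((j : ℚ) + 1/2) = ((-1 - j : ℤ) : ℚ) + 1/2
  push_cast; ring

lemma eHO_eq_iff (j a : ℤ) : eHO j = eHO a ↔ j = a := eHO.apply_eq_iff_eq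

lemma eHO_le_iff (a b : ℤ) : eHO a ≤ eHO b ↔ a ≤ b := by
  rw [← Subtype.coe_le_coe]
  show (a : ℚ) + 1/2 ≤ (b : ℚ) + 1/2 ↔ a ≤ b
  constructor
  · intro h; exact_mod_cast le_of_add_le_add_right h
  · intro h; have : (a : ℚ) ≤ b := by exact_mod_cast h
    linarith

lemma eHO_val_lt_iff (a b : ℤ) : (eHO a).val < (eHO b).val ↔ a < b := by
  rw [eHO_val, eHO_val]
  constructor
  · intro h; exact_mod_cast lt_of_add_lt_add_right h
  · intro h; have : (a : ℚ) < b := by exact_mod_cast h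
    linarith

lemma eHO_val_neg_iff (a : ℤ) : (eHO a).val < 0 ↔ a < 0 := by
  rw [eHO_val]
  constructor
  · intro h
    by_contra hc
    have : (0 : ℚ) ≤ a := by exact_mod_cast not_lt.mp hc
    linarith
  · intro h
    have : (a : ℚ) ≤ -1 := by exact_mod_cast (by omega : a ≤ -1)
    linarith

lemma eHO_val_pos_iff (a : ℤ) : 0 < (eHO a).val ↔ 0 ≤ a := by
  rw [eHO_val]
  constructor
  · intro h
    by_contra hc
    have : (a : ℚ) ≤ -1 := by exact_mod_cast (by omega : a ≤ -1)
    linarith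
  · intro h
    have : (0 : ℚ) ≤ a := by exact_mod_cast h
    linarith

lemma eHO_sum_iff (a b : ℤ) : (eHO a).val + (eHO b).val ≠ 0 ↔ a + b ≠ -1 := by
  rw [eHO_val, eHO_val]
  constructor
  · intro h hc
    apply h
    have : (a : ℚ) + b = -1 := by exact_mod_cast congrArg (fun z : ℤ => (z : ℚ)) hc
    linarith
  · intro h hc
    apply h
    have : (a : ℚ) + b = -1 := by linarith
    exact_mod_cast this
lemma eHO_floor (b k : ℤ) : ⌊(eHO b).val + 1 - (eHO k).val⌋ = b + 1 - k := by
  rw [show (eHO b).val + 1 - (eHO k).val = ((b + 1 - k : ℤ) : ℚ) by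
    rw [eHO_val, eHO_val]; push_cast; ring]
  exact Int.floor_intCast _

lemma Bc_transport (a b j k : ℤ) :
    Bc (eHO a, eHO b) (eHO j, eHO k) = Bc' (a, b) (j, k) := by
  simp only [Bc, Bc', Prod.mk.injEq, eHO_neg, eHO_eq_iff, eHO_le_iff, eHO_sum_iff,
    eHO_val_neg_iff, eHO_val_lt_iff, eHO_val_pos_iff, eHO_floor]

/-- The pair equivalence. -/
def ePair : ℤ × ℤ ≃ HO × HO := Equiv.prodCongr eHO eHO

/-- The bar map, extended `ℚ`-antilinearly with `q ↦ q⁻¹` (on coefficients, the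
involution `invert : ℤ[q,q⁻¹] → ℤ[q,q⁻¹]`, `q ↦ q⁻¹`), is an involution on the
completed rank-2 tensor space: applying it twice fixes each `M_λ`, i.e. for all
`λ, ν` one has `Σ_μ bar(B_{λμ}) · B_{μν} = δ_{λν}`. -/
theorem bar_is_involution (l nu : HO × HO) :
    ∑ᶠ m : HO × HO, (LaurentPolynomial.invert (Bc l m)) * Bc m nu
      = if l = nu then 1 else 0 := by
  obtain ⟨⟨a, b⟩, rfl⟩ := ePair.surjective l
  obtain ⟨⟨c, d⟩, rfl⟩ := ePair.surjective nu
  rw [← finsum_comp_equiv ePair]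
  have hcong : ∀ p : ℤ × ℤ,
      LaurentPolynomial.invert (Bc (ePair (a, b)) (ePair p)) * Bc (ePair p) (ePair (c, d))
        = LaurentPolynomial.invert (Bc' (a, b) p) * Bc' p (c, d) := by
    rintro ⟨j, k⟩
    show LaurentPolynomial.invert (Bc (eHO a, eHO b) (eHO j, eHO k)) *
        Bc (eHO j, eHO k) (eHO c, eHO d) = _
    rw [Bc_transport, Bc_transport]
  rw [finsum_congr hcong, main_int]
  exact (if_congr (Equiv.apply_eq_iff_eq ePair) rfl rfl).symm

end
end

section
/- With the explicit bar involution on the rank-2 tensor space as above, the elements T_{(r,s)} defined by: T_{(r,s)} = M_{(r,s)} for r ≤ s, r+s≠0; T_{(r,s)} = M_{(r,s)} + q M_{(s,r)} for r > s, r+s≠0; T_{(-r,r)} = M_{(-r,r)} + q M_{(-r-1,r+1)} for r ≥ 1/2; T_{(1/2,-1/2)} = M_{(1/2,-1/2)} + q² M_{(-1/2,1/2)}; and T_{(r,-r)} = M_{(r,-r)} + q M_{(r-1,-r+1)} + q M_{(-r+1,r-1)} + q² M_{(-r,r)} for r ≥ 3/2, are all bar-invariant. -/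
noncomputable section
open Finset LaurentPolynomial

def HO.add1 (r : HO) : HO :=
  ⟨r.val + 1, by obtain ⟨k, hk⟩ := r.2; exact ⟨k + 1, by rw [hk]; push_cast; ring⟩⟩

/-- The coefficient of `M_μ` in the canonical basis element `T_λ`:
`T_{(r,s)} = M_{(r,s)}` for `r ≤ s`, `r+s ≠ 0`;
`T_{(r,s)} = M_{(r,s)} + q M_{(s,r)}` for `r > s`, `r+s ≠ 0`;
`T_{(-t,t)} = M_{(-t,t)} + q M_{(-t-1,t+1)}` for `t ≥ 1/2`;
`T_{(1/2,-1/2)} = M_{(1/2,-1/2)} + q² M_{(-1/2,1/2)}`;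
`T_{(t,-t)} = M_{(t,-t)} + q M_{(t-1,-t+1)} + q M_{(-t+1,t-1)} + q² M_{(-t,t)}`
for `t ≥ 3/2`. -/
def Tc (l m : HO × HO) : Lq :=
  let r := l.1; let s := l.2
  if r.val + s.val ≠ 0 then
    if r ≤ s then (if m = l then 1 else 0)
    else (if m = l then 1 else 0) + (if m = (s, r) then qL else 0)
  else if r.val < 0 then
    (if m = l then 1 else 0) + (if m = (HO.neg (HO.add1 s), HO.add1 s) then qL else 0)
  else if r.val = 1/2 then
    (if m = l then 1 else 0) + (if m = (s, r) then qL ^ 2 else 0)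
  else
    (if m = l then 1 else 0) + (if m = (HO.sub1 r, HO.neg (HO.sub1 r)) then qL else 0)
      + (if m = (HO.neg (HO.sub1 r), HO.sub1 r) then qL else 0)
      + (if m = (s, r) then qL ^ 2 else 0)

-- helper lemmas
lemma qq_s12 : qL * qLinv = 1 := by rw [qL, qLinv, ← T_add]; norm_num

lemma negqpow_succ (z : ℤ) : negqpow (z + 1) = -(qL * negqpow z) := by
  have hT : (T (z + 1) : Lq) = T 1 * T z := by rw [← T_add]; ring_nf
  by_cases h : Even z
  · have h1 : ¬ Even (z + 1) := by simp [Int.even_add_one, h]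
    rw [negqpow, negqpow, if_neg h1, if_pos h, hT, qL]; ring
  · have h1 : Even (z + 1) := by rw [Int.even_add_one]; exact h
    rw [negqpow, negqpow, if_pos h1, if_neg h, hT, qL]; ring

lemma invert_qLsq : LaurentPolynomial.invert (qL ^ 2) = qLinv ^ 2 := by rw [map_pow, invert_qL]

lemma HO.val_ne_zero (r : HO) : r.val ≠ 0 := by
  obtain ⟨k, hk⟩ := r.2
  rw [hk]
  intro h
  have h2 : (2 * k : ℤ) = (-1 : ℤ) := by
    have : (2 * k : ℚ) = -1 := by linarith
    exact_mod_cast this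
  omega

lemma HO.gap {a b : HO} (h : a.val < b.val) : a.val + 1 ≤ b.val := by
  obtain ⟨k, hk⟩ := a.2
  obtain ⟨k', hk'⟩ := b.2
  rw [hk, hk'] at h ⊢
  have h1 : (k : ℚ) < k' := by linarith
  have h2 : k < k' := by exact_mod_cast h1
  have h3 : (k + 1 : ℤ) ≤ k' := by omega
  have h4 : ((k + 1 : ℤ) : ℚ) ≤ (k' : ℤ) := by exact_mod_cast h3
  push_cast at h4
  linarith

lemma HO.pos_ge {a : HO} (h : 0 < a.val) : 1/2 ≤ a.val := by
  obtain ⟨k, hk⟩ := a.2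
  rw [hk] at h ⊢
  have h1 : (-1/2 : ℚ) < k := by linarith
  have h2 : (0 : ℤ) ≤ k := by
    by_contra hc
    push_neg at hc
    have : (k : ℚ) ≤ -1 := by exact_mod_cast Int.le_sub_one_of_lt hc
    linarith
  have : (0 : ℚ) ≤ k := by exact_mod_cast h2
  linarith

lemma HO.pos_ne_half {a : HO} (h : 0 < a.val) (h2 : a.val ≠ 1/2) : 3/2 ≤ a.val := by
  obtain ⟨k, hk⟩ := a.2
  rw [hk] at h h2 ⊢
  have h1 : (0 : ℤ) ≤ k := by
    by_contra hc
    push_neg at hc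
    have : (k : ℚ) ≤ -1 := by exact_mod_cast Int.le_sub_one_of_lt hc
    linarith
  have h3 : k ≠ 0 := by
    intro hc
    apply h2
    rw [hc]; norm_num
  have h4 : (1 : ℤ) ≤ k := by omega
  have : (1 : ℚ) ≤ k := by exact_mod_cast h4
  linarith

lemma HO.le_def {a b : HO} : a ≤ b ↔ a.val ≤ b.val := Iff.rfl

-- evaluation lemmas
lemma Bc_le {r s : HO} (h0 : r.val + s.val ≠ 0) (hle : r ≤ s) (m : HO × HO) :
    Bc (r, s) m = if m = (r, s) then 1 else 0 := by
  rw [Bc]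
  simp only
  rw [if_pos h0, if_pos hle]

lemma Bc_gt {r s : HO} (h0 : r.val + s.val ≠ 0) (hgt : ¬ r ≤ s) (m : HO × HO) :
    Bc (r, s) m = (if m = (r, s) then 1 else 0) + (if m = (s, r) then qL - qLinv else 0) := by
  rw [Bc]
  simp only
  rw [if_pos h0, if_neg hgt]

lemma Bc_neg {r s : HO} (h0 : r.val + s.val = 0) (hneg : r.val < 0) (m : HO × HO) :
    Bc (r, s) m = (if m = (r, s) then 1 else 0) +
      (if m.2 = HO.neg m.1 ∧ m.1.val < 0 ∧ s.val < m.2.val then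
        (qL - qLinv) * negqpow ⌊s.val + 1 - m.2.val⌋ else 0) := by
  rw [Bc]
  simp only
  rw [if_neg (by simpa using h0), if_pos hneg]

lemma Bc_pos {r s : HO} (h0 : r.val + s.val = 0) (hpos : ¬ r.val < 0) (m : HO × HO) :
    Bc (r, s) m = (if m = (r, s) then 1 else 0) +
    (if m = (s, r) then qL * (qL - qLinv) else 0) +
    (if m.2 = HO.neg m.1 ∧ 0 < m.1.val ∧ m.1.val < r.val then
      (qL - qLinv) * negqpow ⌊m.1.val + 1 - r.val⌋ else 0) +
    (if m.2 = HO.neg m.1 ∧ m.1.val < 0 then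
      qLinv * (qL - qLinv) * negqpow ⌊m.1.val + 1 - r.val⌋ else 0) := by
  rw [Bc]
  simp only
  rw [if_neg (by simpa using h0), if_neg hpos]

lemma Tc_le {r s : HO} (h0 : r.val + s.val ≠ 0) (hle : r ≤ s) (m : HO × HO) :
    Tc (r, s) m = if m = (r, s) then 1 else 0 := by
  rw [Tc]; simp only
  rw [if_pos h0, if_pos hle]

lemma Tc_gt {r s : HO} (h0 : r.val + s.val ≠ 0) (hgt : ¬ r ≤ s) (m : HO × HO) :
    Tc (r, s) m = (if m = (r, s) then 1 else 0) + (if m = (s, r) then qL else 0) := by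
  rw [Tc]; simp only
  rw [if_pos h0, if_neg hgt]

lemma Tc_neg {r s : HO} (h0 : r.val + s.val = 0) (hneg : r.val < 0) (m : HO × HO) :
    Tc (r, s) m = (if m = (r, s) then 1 else 0) +
      (if m = (HO.neg (HO.add1 s), HO.add1 s) then qL else 0) := by
  rw [Tc]; simp only
  rw [if_neg (by simpa using h0), if_pos hneg]

lemma Tc_half {r s : HO} (h0 : r.val + s.val = 0) (hpos : ¬ r.val < 0) (hh : r.val = 1/2)
    (m : HO × HO) :
    Tc (r, s) m = (if m = (r, s) then 1 else 0) + (if m = (s, r) then qL ^ 2 else 0) := by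
  rw [Tc]; simp only
  rw [if_neg (by simpa using h0), if_neg hpos, if_pos hh]

lemma Tc_big {r s : HO} (h0 : r.val + s.val = 0) (hpos : ¬ r.val < 0) (hh : ¬ r.val = 1/2)
    (m : HO × HO) :
    Tc (r, s) m = (if m = (r, s) then 1 else 0)
      + (if m = (HO.sub1 r, HO.neg (HO.sub1 r)) then qL else 0)
      + (if m = (HO.neg (HO.sub1 r), HO.sub1 r) then qL else 0)
      + (if m = (s, r) then qL ^ 2 else 0) := by
  rw [Tc]; simp only
  rw [if_neg (by simpa using h0), if_neg hpos, if_neg hh]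


/-- The elements `T_λ` are bar-invariant: for all `λ, ν`,
`Σ_μ bar(T-coefficient of M_μ in T_λ) · B_{μν} = (T-coefficient of M_ν in T_λ)`,
i.e. `bar(T_λ) = T_λ` in the completed rank-2 tensor space. -/
theorem T_is_bar_invariant (l nu : HO × HO) :
    ∑ᶠ m : HO × HO, (LaurentPolynomial.invert (Tc l m)) * Bc m nu = Tc l nu := by
  obtain ⟨r, s⟩ := l
  by_cases hsum : r.val + s.val ≠ 0
  · by_cases hle : r ≤ s
    · -- Case A
      rw [finsum_eq_sum_of_support_subset _ (s := {((r, s) : HO × HO)}) ?_]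
      · rw [Finset.sum_singleton, Tc_le hsum hle, if_pos rfl, map_one, one_mul,
          Bc_le hsum hle, Tc_le hsum hle]
      · intro m hm
        simp only [Function.mem_support] at hm
        simp only [Finset.coe_singleton, Set.mem_singleton_iff]
        by_contra h
        exact hm (by rw [Tc_le hsum hle, if_neg h, map_zero, zero_mul])
    · -- Case B
      have hsr : s.val < r.val := by
        rw [HO.le_def] at hle; linarith [lt_of_not_ge hle]
      have hsum2 : s.val + r.val ≠ 0 := by intro h; exact hsum (by linarith)
      have hsle : s ≤ r := by rw [HO.le_def]; linarith
      have hner : ((r, s) : HO × HO) ≠ (s, r) := by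
        intro h
        rw [Prod.ext_iff] at h
        exact absurd (congrArg Subtype.val h.1) (by simp; linarith)
      rw [finsum_eq_sum_of_support_subset _ (s := {((r, s) : HO × HO), (s, r)}) ?_]
      · rw [Finset.sum_pair hner, Tc_gt hsum hle, Tc_gt hsum hle, if_pos rfl,
          if_neg hner, if_neg (Ne.symm hner), if_pos rfl, add_zero, zero_add,
          map_one, one_mul, invert_qL, Bc_gt hsum hle, Bc_le hsum2 hsle,
          Tc_gt hsum hle]
        split_ifs <;> ring
      · intro m hm
        simp only [Function.mem_support] at hm
        simp only [Finset.coe_insert, Set.mem_insert_iff, Finset.coe_singleton,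
          Set.mem_singleton_iff]
        by_contra h
        push_neg at h
        exact hm (by rw [Tc_gt hsum hle, if_neg h.1, if_neg h.2, add_zero, map_zero, zero_mul])
  · push_neg at hsum
    by_cases hr : r.val < 0
    · -- Case C
      have hs : 0 < s.val := by linarith
      have hA1v : (HO.neg (HO.add1 s)).val = -(s.val + 1) := rfl
      have hA2v : (HO.add1 s).val = s.val + 1 := rfl
      have hnegneg : ∀ x : HO, HO.neg (HO.neg x) = x := fun x => Subtype.ext (neg_neg _)
      have hla : ((r, s) : HO × HO) ≠ (HO.neg (HO.add1 s), HO.add1 s) := by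
        intro h
        rw [Prod.ext_iff] at h
        have h2 := congrArg Subtype.val h.1
        rw [hA1v] at h2
        linarith
      rw [finsum_eq_sum_of_support_subset _
            (s := {((r, s) : HO × HO), (HO.neg (HO.add1 s), HO.add1 s)}) ?_]
      · rw [Finset.sum_pair hla, Tc_neg hsum hr, Tc_neg hsum hr, if_pos rfl,
          if_neg hla, if_neg (Ne.symm hla), if_pos rfl, add_zero, zero_add,
          map_one, one_mul, invert_qL,
          Bc_neg hsum hr,
          Bc_neg (r := HO.neg (HO.add1 s)) (s := HO.add1 s)
            (by rw [hA1v, hA2v]; ring) (by rw [hA1v]; linarith) nu,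
          Tc_neg hsum hr]
        simp only [hA2v]
        by_cases h1 : nu = ((r, s) : HO × HO)
        · have h2 : nu ≠ (HO.neg (HO.add1 s), HO.add1 s) := by rw [h1]; exact hla
          have hv : nu.2.val = s.val := by rw [h1]
          have h3 : ¬ (nu.2 = HO.neg nu.1 ∧ nu.1.val < 0 ∧ s.val < nu.2.val) := by
            rintro ⟨-, -, hlt⟩; rw [hv] at hlt; exact lt_irrefl _ hlt
          have h4 : ¬ (nu.2 = HO.neg nu.1 ∧ nu.1.val < 0 ∧ s.val + 1 < nu.2.val) := by
            rintro ⟨-, -, hlt⟩; rw [hv] at hlt; linarith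
          simp only [if_pos h1, if_neg h2, if_neg h3, if_neg h4]
          ring
        · by_cases h2 : nu = ((HO.neg (HO.add1 s), HO.add1 s) : HO × HO)
          · have hv2 : nu.2.val = s.val + 1 := by rw [h2]; exact hA2v
            have hv1 : nu.1.val = -(s.val + 1) := by rw [h2]; exact hA1v
            have h3 : nu.2 = HO.neg nu.1 ∧ nu.1.val < 0 ∧ s.val < nu.2.val :=
              ⟨Subtype.ext (show nu.2.val = -nu.1.val by rw [hv1, hv2]; ring),
               by rw [hv1]; linarith, by rw [hv2]; linarith⟩
            have h4 : ¬ (nu.2 = HO.neg nu.1 ∧ nu.1.val < 0 ∧ s.val + 1 < nu.2.val) := by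
              rintro ⟨-, -, hlt⟩; rw [hv2] at hlt; exact lt_irrefl _ hlt
            simp only [if_pos h2, if_neg h1, if_pos h3, if_neg h4]
            rw [hv2, show s.val + 1 - (s.val + 1) = (0 : ℚ) from by ring,
              Int.floor_zero, negqpow_zero]
            ring
          · by_cases h3 : nu.2 = HO.neg nu.1 ∧ nu.1.val < 0 ∧ s.val < nu.2.val
            · obtain ⟨hsh, hn, hlt⟩ := h3
              have hgap : s.val + 1 ≤ nu.2.val := HO.gap hlt
              have hne : s.val + 1 ≠ nu.2.val := by
                intro he
                apply h2
                have e2 : nu.2 = HO.add1 s := Subtype.ext (by rw [← he]; rfl)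
                have hv : nu.2.val = -nu.1.val := congrArg Subtype.val hsh
                have e1 : nu.1 = HO.neg (HO.add1 s) := by
                  apply Subtype.ext
                  show nu.1.val = -(s.val + 1)
                  rw [he]
                  linarith
                rw [Prod.ext_iff]
                exact ⟨e1, e2⟩
              have h4 : nu.2 = HO.neg nu.1 ∧ nu.1.val < 0 ∧ s.val + 1 < nu.2.val :=
                ⟨hsh, hn, lt_of_le_of_ne hgap hne⟩
              have h3' : nu.2 = HO.neg nu.1 ∧ nu.1.val < 0 ∧ s.val < nu.2.val := ⟨hsh, hn, hlt⟩
              simp only [if_pos h4, if_pos h3', if_neg h1, if_neg h2]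
              rw [show s.val + 1 + 1 - nu.2.val = (s.val + 1 - nu.2.val) + 1 from by ring,
                Int.floor_add_one, negqpow_succ]
              linear_combination (-(qL - qLinv) * negqpow ⌊s.val + 1 - nu.2.val⌋) * qq_s12
            · have h4 : ¬ (nu.2 = HO.neg nu.1 ∧ nu.1.val < 0 ∧ s.val + 1 < nu.2.val) := by
                rintro ⟨a, b, c⟩; exact h3 ⟨a, b, by linarith⟩
              simp only [if_neg h1, if_neg h2, if_neg h3, if_neg h4]
              ring
      · intro m hm
        simp only [Function.mem_support] at hm
        simp only [Finset.coe_insert, Set.mem_insert_iff, Finset.coe_singleton,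
          Set.mem_singleton_iff]
        by_contra h
        push_neg at h
        exact hm (by rw [Tc_neg hsum hr, if_neg h.1, if_neg h.2, add_zero, map_zero, zero_mul])
    · by_cases hh : r.val = 1/2
      · -- Case D
        have hsv : s.val = -(1/2 : ℚ) := by linarith
        have hlb : ((r, s) : HO × HO) ≠ (s, r) := by
          intro h
          rw [Prod.ext_iff] at h
          have h2 := congrArg Subtype.val h.1
          rw [hh, hsv] at h2
          norm_num at h2
        rw [finsum_eq_sum_of_support_subset _ (s := {((r, s) : HO × HO), (s, r)}) ?_]
        · rw [Finset.sum_pair hlb, Tc_half hsum hr hh, Tc_half hsum hr hh, if_pos rfl,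
            if_neg hlb, if_neg (Ne.symm hlb), if_pos rfl, add_zero, zero_add,
            map_one, one_mul, invert_qLsq,
            Bc_pos hsum hr,
            Bc_neg (r := s) (s := r) (by linarith) (by linarith) nu,
            Tc_half hsum hr hh]
          by_cases h1 : nu = ((r, s) : HO × HO)
          · have hv1 : nu.1.val = r.val := by rw [h1]
            have h2 : nu ≠ ((s, r) : HO × HO) := by rw [h1]; exact hlb
            have h3 : ¬ (nu.2 = HO.neg nu.1 ∧ 0 < nu.1.val ∧ nu.1.val < r.val) := by
              rintro ⟨-, -, hlt⟩; rw [hv1] at hlt; exact lt_irrefl _ hlt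
            have h4 : ¬ (nu.2 = HO.neg nu.1 ∧ nu.1.val < 0) := by
              rintro ⟨-, hlt⟩; rw [hv1, hh] at hlt; linarith
            have h5 : ¬ (nu.2 = HO.neg nu.1 ∧ nu.1.val < 0 ∧ r.val < nu.2.val) := by
              rintro ⟨-, hlt, -⟩; rw [hv1, hh] at hlt; linarith
            simp only [if_pos h1, if_neg h2, if_neg h3, if_neg h4, if_neg h5]
            ring
          · by_cases h2 : nu = ((s, r) : HO × HO)
            · have hv1 : nu.1.val = s.val := by rw [h2]
              have hv2 : nu.2.val = r.val := by rw [h2]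
              have h4 : nu.2 = HO.neg nu.1 ∧ nu.1.val < 0 :=
                ⟨Subtype.ext (show nu.2.val = -nu.1.val by rw [hv1, hv2]; linarith),
                 by rw [hv1, hsv]; norm_num⟩
              have h3 : ¬ (nu.2 = HO.neg nu.1 ∧ 0 < nu.1.val ∧ nu.1.val < r.val) := by
                rintro ⟨-, hlt, -⟩; rw [hv1, hsv] at hlt; linarith
              have h5 : ¬ (nu.2 = HO.neg nu.1 ∧ nu.1.val < 0 ∧ r.val < nu.2.val) := by
                rintro ⟨-, -, hlt⟩; rw [hv2] at hlt; exact lt_irrefl _ hlt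
              simp only [if_pos h2, if_neg h1, if_pos h4, if_neg h3, if_neg h5]
              rw [show nu.1.val + 1 - r.val = (0 : ℚ) from by rw [hv1, hsv, hh]; norm_num,
                Int.floor_zero, negqpow_zero]
              ring
            · by_cases hsh : nu.2 = HO.neg nu.1
              · have hv : nu.2.val = -nu.1.val := congrArg Subtype.val hsh
                by_cases hneg : nu.1.val < 0
                · have h4 : nu.2 = HO.neg nu.1 ∧ nu.1.val < 0 := ⟨hsh, hneg⟩
                  have h3 : ¬ (nu.2 = HO.neg nu.1 ∧ 0 < nu.1.val ∧ nu.1.val < r.val) := by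
                    rintro ⟨-, hlt, -⟩; linarith
                  have hne : nu.2.val ≠ r.val := by
                    intro he
                    apply h2
                    rw [Prod.ext_iff]
                    refine ⟨Subtype.ext ?_, Subtype.ext ?_⟩
                    · show nu.1.val = s.val; rw [hsv]; rw [hh] at he; linarith
                    · exact he
                  have h5 : nu.2 = HO.neg nu.1 ∧ nu.1.val < 0 ∧ r.val < nu.2.val := by
                    refine ⟨hsh, hneg, ?_⟩
                    have hp := HO.pos_ge (show 0 < nu.2.val by linarith)
                    rw [hh]
                    rcases lt_or_eq_of_le hp with h | h
                    · exact h
                    · exfalso; apply hne; rw [← h, hh]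
                  simp only [if_pos h4, if_pos h5, if_neg h1, if_neg h2, if_neg h3]
                  rw [show r.val + 1 - nu.2.val = (nu.1.val + 1 - r.val) + 1 from by
                      rw [hv, hh]; ring,
                    Int.floor_add_one, negqpow_succ]
                  linear_combination (-qLinv * (qL - qLinv) * negqpow ⌊nu.1.val + 1 - r.val⌋) * qq_s12
                · have hpos : 0 < nu.1.val :=
                    lt_of_le_of_ne (not_lt.mp hneg) (Ne.symm (HO.val_ne_zero nu.1))
                  have h3 : ¬ (nu.2 = HO.neg nu.1 ∧ 0 < nu.1.val ∧ nu.1.val < r.val) := by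
                    rintro ⟨-, -, hlt⟩
                    have := HO.pos_ge hpos
                    rw [hh] at hlt
                    linarith
                  have h4 : ¬ (nu.2 = HO.neg nu.1 ∧ nu.1.val < 0) := by
                    rintro ⟨-, hlt⟩; linarith
                  have h5 : ¬ (nu.2 = HO.neg nu.1 ∧ nu.1.val < 0 ∧ r.val < nu.2.val) := by
                    rintro ⟨-, hlt, -⟩; linarith
                  simp only [if_neg h1, if_neg h2, if_neg h3, if_neg h4, if_neg h5]
                  ring
              · have h3 : ¬ (nu.2 = HO.neg nu.1 ∧ 0 < nu.1.val ∧ nu.1.val < r.val) := by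
                  rintro ⟨ha, -⟩; exact hsh ha
                have h4 : ¬ (nu.2 = HO.neg nu.1 ∧ nu.1.val < 0) := by
                  rintro ⟨ha, -⟩; exact hsh ha
                have h5 : ¬ (nu.2 = HO.neg nu.1 ∧ nu.1.val < 0 ∧ r.val < nu.2.val) := by
                  rintro ⟨ha, -⟩; exact hsh ha
                simp only [if_neg h1, if_neg h2, if_neg h3, if_neg h4, if_neg h5]
                ring
        · intro m hm
          simp only [Function.mem_support] at hm
          simp only [Finset.coe_insert, Set.mem_insert_iff, Finset.coe_singleton,
            Set.mem_singleton_iff]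
          by_contra h
          push_neg at h
          exact hm (by rw [Tc_half hsum hr hh, if_neg h.1, if_neg h.2, add_zero, map_zero,
            zero_mul])
      · -- Case E
        have hrpos : 0 < r.val :=
          lt_of_le_of_ne (not_lt.mp hr) (Ne.symm (HO.val_ne_zero r))
        have h32 : 3/2 ≤ r.val := HO.pos_ne_half hrpos hh
        have hsv : s.val = -r.val := by linarith
        have hB1 : (HO.sub1 r).val = r.val - 1 := rfl
        have hB2 : (HO.neg (HO.sub1 r)).val = -(r.val - 1) := rfl
        have pne : ∀ (a b c d : HO), a.val ≠ c.val → ((a, b) : HO × HO) ≠ (c, d) := by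
          intro a b c d hne h
          rw [Prod.ext_iff] at h
          exact hne (congrArg Subtype.val h.1)
        have d12 : ((r, s) : HO × HO) ≠ (HO.sub1 r, HO.neg (HO.sub1 r)) :=
          pne _ _ _ _ (by rw [hB1]; intro hc; linarith)
        have d13 : ((r, s) : HO × HO) ≠ (HO.neg (HO.sub1 r), HO.sub1 r) :=
          pne _ _ _ _ (by rw [hB2]; intro hc; linarith)
        have d14 : ((r, s) : HO × HO) ≠ (s, r) :=
          pne _ _ _ _ (by rw [hsv]; intro hc; linarith)
        have d23 : ((HO.sub1 r, HO.neg (HO.sub1 r)) : HO × HO) ≠ (HO.neg (HO.sub1 r), HO.sub1 r) :=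
          pne _ _ _ _ (by rw [hB1, hB2]; intro hc; linarith)
        have d24 : ((HO.sub1 r, HO.neg (HO.sub1 r)) : HO × HO) ≠ (s, r) :=
          pne _ _ _ _ (by rw [hB1, hsv]; intro hc; linarith)
        have d34 : ((HO.neg (HO.sub1 r), HO.sub1 r) : HO × HO) ≠ (s, r) :=
          pne _ _ _ _ (by rw [hB2, hsv]; intro hc; linarith)
        have t1 : Tc (r, s) (r, s) = 1 := by
          rw [Tc_big hsum hr hh]
          simp only [if_pos rfl, if_neg d12, if_neg d13, if_neg d14]
          simp
        have t2 : Tc (r, s) (HO.sub1 r, HO.neg (HO.sub1 r)) = qL := by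
          rw [Tc_big hsum hr hh]
          simp only [if_pos rfl, if_neg (Ne.symm d12), if_neg d23, if_neg d24]
          simp
        have t3 : Tc (r, s) (HO.neg (HO.sub1 r), HO.sub1 r) = qL := by
          rw [Tc_big hsum hr hh]
          simp only [if_pos rfl, if_neg (Ne.symm d13), if_neg (Ne.symm d23), if_neg d34]
          simp
        have t4 : Tc (r, s) (s, r) = qL ^ 2 := by
          rw [Tc_big hsum hr hh]
          simp only [if_pos rfl, if_neg (Ne.symm d14), if_neg (Ne.symm d24), if_neg (Ne.symm d34)]
          simp
        rw [finsum_eq_sum_of_support_subset _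
              (s := {((r, s) : HO × HO), (HO.sub1 r, HO.neg (HO.sub1 r)),
                     (HO.neg (HO.sub1 r), HO.sub1 r), (s, r)}) ?_]
        · rw [Finset.sum_insert (by
              simp only [Finset.mem_insert, Finset.mem_singleton]
              push_neg
              exact ⟨d12, d13, d14⟩),
            Finset.sum_insert (by
              simp only [Finset.mem_insert, Finset.mem_singleton]
              push_neg
              exact ⟨d23, d24⟩),
            Finset.sum_pair d34,
            t1, t2, t3, t4, map_one, one_mul, invert_qL, invert_qLsq,
            Bc_pos hsum hr,
            Bc_pos (r := HO.sub1 r) (s := HO.neg (HO.sub1 r))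
              (by rw [hB1, hB2]; ring) (by rw [hB1]; linarith) nu,
            Bc_neg (r := HO.neg (HO.sub1 r)) (s := HO.sub1 r)
              (by rw [hB1, hB2]; ring) (by rw [hB2]; linarith) nu,
            Bc_neg (r := s) (s := r) (by linarith) (by linarith) nu,
            Tc_big hsum hr hh]
          simp only [hB1, hB2]
          by_cases hsh : nu.2 = HO.neg nu.1
          · have hv : nu.2.val = -nu.1.val := congrArg Subtype.val hsh
            by_cases hneg : nu.1.val < 0
            · have hQ4 : nu.2 = HO.neg nu.1 ∧ nu.1.val < 0 := ⟨hsh, hneg⟩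
              have hQ1 : nu ≠ ((r, s) : HO × HO) := by
                intro h; have : nu.1.val = r.val := by rw [h]
                linarith
              have hQ5 : nu ≠ ((HO.sub1 r, HO.neg (HO.sub1 r)) : HO × HO) := by
                intro h; have : nu.1.val = r.val - 1 := by rw [h]; exact hB1
                linarith
              have hQ3 : ¬ (nu.2 = HO.neg nu.1 ∧ 0 < nu.1.val ∧ nu.1.val < r.val) := by
                rintro ⟨-, hlt, -⟩; linarith
              have hQ7 : ¬ (nu.2 = HO.neg nu.1 ∧ 0 < nu.1.val ∧ nu.1.val < r.val - 1) := by
                rintro ⟨-, hlt, -⟩; linarith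
              by_cases f1 : nu.1.val = -(r.val - 1)
              · have hQ6 : nu = ((HO.neg (HO.sub1 r), HO.sub1 r) : HO × HO) := by
                  rw [Prod.ext_iff]
                  exact ⟨Subtype.ext (show nu.1.val = -(r.val - 1) from f1),
                    Subtype.ext (show nu.2.val = r.val - 1 by rw [hv, f1]; ring)⟩
                have hQ2 : nu ≠ ((s, r) : HO × HO) := by
                  intro h; have : nu.1.val = s.val := by rw [h]
                  rw [hsv] at this; linarith
                have hv2 : nu.2.val = r.val - 1 := by rw [hv, f1]; ring
                have hQ9 : ¬ (nu.2 = HO.neg nu.1 ∧ nu.1.val < 0 ∧ r.val - 1 < nu.2.val) := by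
                  rintro ⟨-, -, hlt⟩; rw [hv2] at hlt; exact lt_irrefl _ hlt
                have hQ10 : ¬ (nu.2 = HO.neg nu.1 ∧ nu.1.val < 0 ∧ r.val < nu.2.val) := by
                  rintro ⟨-, -, hlt⟩; rw [hv2] at hlt; linarith
                simp only [if_pos hQ6, if_pos hQ4, if_neg hQ1, if_neg hQ2, if_neg hQ3,
                  if_neg hQ5, if_neg hQ7, if_neg hQ9, if_neg hQ10]
                rw [show nu.1.val + 1 - (r.val - 1) = (nu.1.val + 1 - r.val) + 1 from by ring,
                  Int.floor_add_one, negqpow_succ]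
                linear_combination ((qL - qLinv) - qLinv * (qL - qLinv) *
                  negqpow ⌊nu.1.val + 1 - r.val⌋) * qq_s12
              · by_cases f2 : nu.1.val = -r.val
                · have hQ2 : nu = ((s, r) : HO × HO) := by
                    rw [Prod.ext_iff]
                    exact ⟨Subtype.ext (show nu.1.val = s.val by rw [f2, hsv]),
                      Subtype.ext (show nu.2.val = r.val by rw [hv, f2]; ring)⟩
                  have hv2 : nu.2.val = r.val := by rw [hv, f2]; ring
                  have hQ6 : nu ≠ ((HO.neg (HO.sub1 r), HO.sub1 r) : HO × HO) := by
                    intro h; have : nu.1.val = -(r.val - 1) := by rw [h]; exact hB2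
                    exact f1 this
                  have hQ9 : nu.2 = HO.neg nu.1 ∧ nu.1.val < 0 ∧ r.val - 1 < nu.2.val :=
                    ⟨hsh, hneg, by rw [hv2]; linarith⟩
                  have hQ10 : ¬ (nu.2 = HO.neg nu.1 ∧ nu.1.val < 0 ∧ r.val < nu.2.val) := by
                    rintro ⟨-, -, hlt⟩; rw [hv2] at hlt; exact lt_irrefl _ hlt
                  simp only [if_pos hQ2, if_pos hQ4, if_pos hQ9, if_neg hQ1, if_neg hQ3,
                    if_neg hQ5, if_neg hQ6, if_neg hQ7, if_neg hQ10]
                  rw [show r.val - 1 + 1 - nu.2.val = (0 : ℚ) from by rw [hv2]; ring,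
                    Int.floor_zero, negqpow_zero,
                    show nu.1.val + 1 - (r.val - 1) = (nu.1.val + 1 - r.val) + 1 from by ring,
                    Int.floor_add_one, negqpow_succ]
                  linear_combination (-qLinv * (qL - qLinv) *
                    negqpow ⌊nu.1.val + 1 - r.val⌋) * qq_s12
                · have hQ2 : nu ≠ ((s, r) : HO × HO) := by
                    intro h; have : nu.1.val = s.val := by rw [h]
                    rw [hsv] at this; exact f2 this
                  have hQ6 : nu ≠ ((HO.neg (HO.sub1 r), HO.sub1 r) : HO × HO) := by
                    intro h; have : nu.1.val = -(r.val - 1) := by rw [h]; exact hB2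
                    exact f1 this
                  by_cases g1 : nu.2.val < r.val - 1
                  · have hQ9 : ¬ (nu.2 = HO.neg nu.1 ∧ nu.1.val < 0 ∧ r.val - 1 < nu.2.val) := by
                      rintro ⟨-, -, hlt⟩; linarith
                    have hQ10 : ¬ (nu.2 = HO.neg nu.1 ∧ nu.1.val < 0 ∧ r.val < nu.2.val) := by
                      rintro ⟨-, -, hlt⟩; linarith
                    simp only [if_pos hQ4, if_neg hQ1, if_neg hQ2, if_neg hQ3, if_neg hQ5,
                      if_neg hQ6, if_neg hQ7, if_neg hQ9, if_neg hQ10]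
                    rw [show nu.1.val + 1 - (r.val - 1) = (nu.1.val + 1 - r.val) + 1 from by ring,
                      Int.floor_add_one, negqpow_succ]
                    linear_combination (-qLinv * (qL - qLinv) *
                      negqpow ⌊nu.1.val + 1 - r.val⌋) * qq_s12
                  · have hgt1 : r.val - 1 < nu.2.val := by
                      rcases lt_or_eq_of_le (not_lt.mp g1) with h | h
                      · exact h
                      · exfalso; apply f1; rw [← h] at hv; linarith
                    have hge : r.val ≤ nu.2.val := by
                      have := HO.gap (a := HO.sub1 r) (b := nu.2) (by rw [hB1]; exact hgt1)
                      rw [hB1] at this; linarith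
                    have hgt2 : r.val < nu.2.val := by
                      rcases lt_or_eq_of_le hge with h | h
                      · exact h
                      · exfalso; apply f2; rw [← h] at hv; linarith
                    have hQ9 : nu.2 = HO.neg nu.1 ∧ nu.1.val < 0 ∧ r.val - 1 < nu.2.val :=
                      ⟨hsh, hneg, hgt1⟩
                    have hQ10 : nu.2 = HO.neg nu.1 ∧ nu.1.val < 0 ∧ r.val < nu.2.val :=
                      ⟨hsh, hneg, hgt2⟩
                    simp only [if_pos hQ4, if_pos hQ9, if_pos hQ10, if_neg hQ1, if_neg hQ2,
                      if_neg hQ3, if_neg hQ5, if_neg hQ6, if_neg hQ7]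
                    rw [show nu.1.val + 1 - (r.val - 1) = (nu.1.val + 1 - r.val) + 1 from by ring,
                      Int.floor_add_one, negqpow_succ,
                      show r.val + 1 - nu.2.val = (r.val - 1 + 1 - nu.2.val) + 1 from by ring,
                      Int.floor_add_one, negqpow_succ]
                    linear_combination (-qLinv * (qL - qLinv) * negqpow ⌊nu.1.val + 1 - r.val⌋
                      - qLinv * (qL - qLinv) * negqpow ⌊r.val - 1 + 1 - nu.2.val⌋) * qq_s12
            · have hpos : 0 < nu.1.val :=
                lt_of_le_of_ne (not_lt.mp hneg) (Ne.symm (HO.val_ne_zero nu.1))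
              have hQ2 : nu ≠ ((s, r) : HO × HO) := by
                intro h; have : nu.1.val = s.val := by rw [h]
                rw [hsv] at this; linarith
              have hQ6 : nu ≠ ((HO.neg (HO.sub1 r), HO.sub1 r) : HO × HO) := by
                intro h; have : nu.1.val = -(r.val - 1) := by rw [h]; exact hB2
                linarith
              have hQ4 : ¬ (nu.2 = HO.neg nu.1 ∧ nu.1.val < 0) := by
                rintro ⟨-, hlt⟩; linarith
              have hQ9 : ¬ (nu.2 = HO.neg nu.1 ∧ nu.1.val < 0 ∧ r.val - 1 < nu.2.val) := by
                rintro ⟨-, hlt, -⟩; linarith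
              have hQ10 : ¬ (nu.2 = HO.neg nu.1 ∧ nu.1.val < 0 ∧ r.val < nu.2.val) := by
                rintro ⟨-, hlt, -⟩; linarith
              by_cases e1 : nu.1.val = r.val
              · have hQ1 : nu = ((r, s) : HO × HO) := by
                  rw [Prod.ext_iff]
                  exact ⟨Subtype.ext (show nu.1.val = r.val from e1),
                    Subtype.ext (show nu.2.val = s.val by rw [hv, e1, hsv])⟩
                have hQ5 : nu ≠ ((HO.sub1 r, HO.neg (HO.sub1 r)) : HO × HO) := by
                  intro h; have : nu.1.val = r.val - 1 := by rw [h]; exact hB1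
                  linarith
                have hQ3 : ¬ (nu.2 = HO.neg nu.1 ∧ 0 < nu.1.val ∧ nu.1.val < r.val) := by
                  rintro ⟨-, -, hlt⟩; rw [e1] at hlt; exact lt_irrefl _ hlt
                have hQ7 : ¬ (nu.2 = HO.neg nu.1 ∧ 0 < nu.1.val ∧ nu.1.val < r.val - 1) := by
                  rintro ⟨-, -, hlt⟩; rw [e1] at hlt; linarith
                simp only [if_pos hQ1, if_neg hQ2, if_neg hQ3, if_neg hQ4, if_neg hQ5,
                  if_neg hQ6, if_neg hQ7, if_neg hQ9, if_neg hQ10]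
                ring
              · by_cases e2 : nu.1.val = r.val - 1
                · have hQ5 : nu = ((HO.sub1 r, HO.neg (HO.sub1 r)) : HO × HO) := by
                    rw [Prod.ext_iff]
                    exact ⟨Subtype.ext (show nu.1.val = r.val - 1 from e2),
                      Subtype.ext (show nu.2.val = -(r.val - 1) by rw [hv, e2])⟩
                  have hQ1 : nu ≠ ((r, s) : HO × HO) := by
                    intro h; have : nu.1.val = r.val := by rw [h]
                    rw [e2] at this; linarith
                  have hQ3 : nu.2 = HO.neg nu.1 ∧ 0 < nu.1.val ∧ nu.1.val < r.val :=
                    ⟨hsh, hpos, by rw [e2]; linarith⟩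
                  have hQ7 : ¬ (nu.2 = HO.neg nu.1 ∧ 0 < nu.1.val ∧ nu.1.val < r.val - 1) := by
                    rintro ⟨-, -, hlt⟩; rw [e2] at hlt; exact lt_irrefl _ hlt
                  simp only [if_pos hQ5, if_pos hQ3, if_neg hQ1, if_neg hQ2, if_neg hQ4,
                    if_neg hQ6, if_neg hQ7, if_neg hQ9, if_neg hQ10]
                  rw [show nu.1.val + 1 - r.val = (0 : ℚ) from by rw [e2]; ring,
                    Int.floor_zero, negqpow_zero]
                  ring
                · have hQ1 : nu ≠ ((r, s) : HO × HO) := by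
                    intro h; have : nu.1.val = r.val := by rw [h]
                    exact e1 this
                  have hQ5 : nu ≠ ((HO.sub1 r, HO.neg (HO.sub1 r)) : HO × HO) := by
                    intro h; have : nu.1.val = r.val - 1 := by rw [h]; exact hB1
                    exact e2 this
                  by_cases e3 : nu.1.val < r.val - 1
                  · have hQ3 : nu.2 = HO.neg nu.1 ∧ 0 < nu.1.val ∧ nu.1.val < r.val :=
                      ⟨hsh, hpos, by linarith⟩
                    have hQ7 : nu.2 = HO.neg nu.1 ∧ 0 < nu.1.val ∧ nu.1.val < r.val - 1 :=
                      ⟨hsh, hpos, e3⟩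
                    simp only [if_pos hQ3, if_pos hQ7, if_neg hQ1, if_neg hQ2, if_neg hQ4,
                      if_neg hQ5, if_neg hQ6, if_neg hQ9, if_neg hQ10]
                    rw [show nu.1.val + 1 - (r.val - 1) = (nu.1.val + 1 - r.val) + 1 from by ring,
                      Int.floor_add_one, negqpow_succ]
                    linear_combination (-(qL - qLinv) * negqpow ⌊nu.1.val + 1 - r.val⌋) * qq_s12
                  · have hgt1 : r.val - 1 < nu.1.val := by
                      rcases lt_or_eq_of_le (not_lt.mp e3) with h | h
                      · exact h
                      · exact absurd h.symm e2
                    have hge : r.val ≤ nu.1.val := by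
                      have := HO.gap (a := HO.sub1 r) (b := nu.1) (by rw [hB1]; exact hgt1)
                      rw [hB1] at this; linarith
                    have hgt2 : r.val < nu.1.val := by
                      rcases lt_or_eq_of_le hge with h | h
                      · exact h
                      · exact absurd h.symm e1
                    have hQ3 : ¬ (nu.2 = HO.neg nu.1 ∧ 0 < nu.1.val ∧ nu.1.val < r.val) := by
                      rintro ⟨-, -, hlt⟩; linarith
                    have hQ7 : ¬ (nu.2 = HO.neg nu.1 ∧ 0 < nu.1.val ∧ nu.1.val < r.val - 1) := by
                      rintro ⟨-, -, hlt⟩; linarith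
                    simp only [if_neg hQ1, if_neg hQ2, if_neg hQ3, if_neg hQ4, if_neg hQ5,
                      if_neg hQ6, if_neg hQ7, if_neg hQ9, if_neg hQ10]
                    ring
          · have hsrel : s = HO.neg r := Subtype.ext (show s.val = -r.val from hsv)
            have hQ1 : nu ≠ ((r, s) : HO × HO) := by
              intro h; apply hsh; rw [h]; exact hsrel
            have hQ2 : nu ≠ ((s, r) : HO × HO) := by
              intro h; apply hsh; rw [h]
              exact Subtype.ext (show r.val = -s.val by rw [hsv]; ring)
            have hQ5 : nu ≠ ((HO.sub1 r, HO.neg (HO.sub1 r)) : HO × HO) := by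
              intro h; apply hsh; rw [h]
            have hQ6 : nu ≠ ((HO.neg (HO.sub1 r), HO.sub1 r) : HO × HO) := by
              intro h; apply hsh; rw [h]
              exact Subtype.ext (show (HO.sub1 r).val = -(HO.neg (HO.sub1 r)).val by
                rw [hB1, hB2]; ring)
            have hQ3 : ¬ (nu.2 = HO.neg nu.1 ∧ 0 < nu.1.val ∧ nu.1.val < r.val) := by
              rintro ⟨ha, -⟩; exact hsh ha
            have hQ4 : ¬ (nu.2 = HO.neg nu.1 ∧ nu.1.val < 0) := by
              rintro ⟨ha, -⟩; exact hsh ha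
            have hQ7 : ¬ (nu.2 = HO.neg nu.1 ∧ 0 < nu.1.val ∧ nu.1.val < r.val - 1) := by
              rintro ⟨ha, -⟩; exact hsh ha
            have hQ9 : ¬ (nu.2 = HO.neg nu.1 ∧ nu.1.val < 0 ∧ r.val - 1 < nu.2.val) := by
              rintro ⟨ha, -⟩; exact hsh ha
            have hQ10 : ¬ (nu.2 = HO.neg nu.1 ∧ nu.1.val < 0 ∧ r.val < nu.2.val) := by
              rintro ⟨ha, -⟩; exact hsh ha
            simp only [if_neg hQ1, if_neg hQ2, if_neg hQ3, if_neg hQ4, if_neg hQ5,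
              if_neg hQ6, if_neg hQ7, if_neg hQ9, if_neg hQ10]
            ring
        · intro m hm
          simp only [Function.mem_support] at hm
          simp only [Finset.coe_insert, Set.mem_insert_iff, Finset.coe_singleton,
            Set.mem_singleton_iff]
          by_contra h
          push_neg at h
          exact hm (by rw [Tc_big hsum hr hh, if_neg h.1, if_neg h.2.1, if_neg h.2.2.1,
            if_neg h.2.2.2, add_zero, add_zero, add_zero, map_zero, zero_mul])

end
end
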